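/- arXiv:1905.01148 — 3 statements merged into one kernel-verified Lean document; each statement's English description precedes it below -/
import Mathlib

section
/- Let 𝒜 be an abelian length category and [𝒰, 𝒯] a join interval in tors 𝒜, i.e., 𝒯 is the join of the set [𝒰,𝒯]⁻ consisting of 𝒰 and all 𝒱 ∈ [𝒰,𝒯] with a Hasse arrow 𝒱 → 𝒰. Let ℒ be the set of brick labels of the Hasse arrows 𝒱 → 𝒰 with 𝒱 ∈ [𝒰,𝒯]. Then 𝒰^⊥ ∩ 𝒯 = Filt ℒ. -/
open CategoryTheory CategoryTheory.Limits

universe v u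

attribute [local instance] CategoryTheory.Abelian.hasFiniteBiproducts

variable (C : Type u) [Category.{v} C] [Abelian C]

/-- The right Hom-perpendicular category of a class of objects. -/
def RPerp (X : Set C) : Set C := {Y | ∀ A ∈ X, ∀ f : A ⟶ Y, f = 0}

/-- The left Hom-perpendicular category of a class of objects. -/
def LPerp (X : Set C) : Set C := {Y | ∀ A ∈ X, ∀ f : Y ⟶ A, f = 0}

/-- A torsion class: a class of objects containing the zero objects and closed under
quotients and extensions. -/
structure IsTorsionClass (T : Set C) : Prop where
  zero_mem : ∀ Z : C, IsZero Z → Z ∈ T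
  quot_mem : ∀ ⦃A B : C⦄ (f : A ⟶ B), Epi f → A ∈ T → B ∈ T
  ext_mem : ∀ E : ShortComplex C, E.ShortExact → E.X₁ ∈ T → E.X₃ ∈ T → E.X₂ ∈ T

/-- A torsion-free class: a class of objects containing the zero objects and closed under
subobjects and extensions. -/
structure IsTorsionFreeClass (F : Set C) : Prop where
  zero_mem : ∀ Z : C, IsZero Z → Z ∈ F
  sub_mem : ∀ ⦃A B : C⦄ (f : A ⟶ B), Mono f → B ∈ F → A ∈ F
  ext_mem : ∀ E : ShortComplex C, E.ShortExact → E.X₁ ∈ F → E.X₃ ∈ F → E.X₂ ∈ F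

/-- The smallest torsion class containing a class of objects. -/
def torsClosure (X : Set C) : Set C := ⋂₀ {T | IsTorsionClass C T ∧ X ⊆ T}

/-- The smallest torsion-free class containing a class of objects. -/
def torfClosure (X : Set C) : Set C := ⋂₀ {F | IsTorsionFreeClass C F ∧ X ⊆ F}

/-- `ExtStar U W` is the class of objects `X` admitting a short exact sequence
`0 → U' → X → W' → 0` with `U' ∈ U` and `W' ∈ W`. -/
def ExtStar (U W : Set C) : Set C :=
  {X | ∃ E : ShortComplex C, E.ShortExact ∧ E.X₁ ∈ U ∧ E.X₃ ∈ W ∧ Nonempty (E.X₂ ≅ X)}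

/-- The additive closure of a class of objects: direct summands of finite direct sums. -/
def AddClosure (S : Set C) : Set C :=
  {X | ∃ (n : ℕ) (c : Fin n → C), (∀ i, c i ∈ S) ∧ ∃ f : (⨁ c) ⟶ X, IsSplitEpi f}

/-- Membership in the filtration closure `Filt S`: objects admitting a finite filtration
with subquotients in `AddClosure S`. -/
inductive FiltMem (S : Set C) : C → Prop
  | of_isZero (X : C) : IsZero X → FiltMem S X
  | ext (E : ShortComplex C) : E.ShortExact → FiltMem S E.X₁ →
      E.X₃ ∈ AddClosure C S → FiltMem S E.X₂
  | of_iso (X Y : C) (e : X ≅ Y) : FiltMem S X → FiltMem S Y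

/-- The filtration closure of a class of objects. -/
def Filt (S : Set C) : Set C := {X | FiltMem C S X}

/-- The class of quotients of objects of the additive closure of `S`. -/
def Fac (S : Set C) : Set C := {X | ∃ A ∈ AddClosure C S, ∃ f : A ⟶ X, Epi f}

/-- The class of subobjects of objects of the additive closure of `S`. -/
def Subm (S : Set C) : Set C := {X | ∃ A ∈ AddClosure C S, ∃ f : X ⟶ A, Mono f}

/-- A wide subcategory: closed under kernels, cokernels and extensions
(and containing the zero objects). -/
structure IsWide (W : Set C) : Prop where
  zero_mem : ∀ Z : C, IsZero Z → Z ∈ W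
  ker_mem : ∀ ⦃X Y : C⦄ (f : X ⟶ Y), X ∈ W → Y ∈ W → kernel f ∈ W
  coker_mem : ∀ ⦃X Y : C⦄ (f : X ⟶ Y), X ∈ W → Y ∈ W → cokernel f ∈ W
  ext_mem : ∀ E : ShortComplex C, E.ShortExact → E.X₁ ∈ W → E.X₃ ∈ W → E.X₂ ∈ W

/-- A brick: a nonzero object all of whose nonzero endomorphisms are invertible
(equivalently, the endomorphism ring is a division ring). -/
def IsBrick (S : C) : Prop := ¬ IsZero S ∧ ∀ f : S ⟶ S, f = 0 ∨ IsIso f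

/-- A simple object of the full abelian subcategory determined by a wide subcategory `W`. -/
def IsSimpleIn (W : Set C) (S : C) : Prop :=
  S ∈ W ∧ ¬ IsZero S ∧ ∀ ⦃A : C⦄ (f : A ⟶ S), A ∈ W → Mono f → IsZero A ∨ IsIso f

/-- A Hasse arrow `T → U` in the poset of torsion classes: `U ⊊ T` are adjacent. -/
def IsHasseArrow (T U : Set C) : Prop :=
  IsTorsionClass C T ∧ IsTorsionClass C U ∧ U ⊂ T ∧
    ∀ V : Set C, IsTorsionClass C V → U ⊆ V → V ⊆ T → V = U ∨ V = T

/-- A Hasse arrow `F → G` in the poset of torsion-free classes: `G ⊊ F` are adjacent. -/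
def IsHasseArrowTorf (F G : Set C) : Prop :=
  IsTorsionFreeClass C F ∧ IsTorsionFreeClass C G ∧ G ⊂ F ∧
    ∀ H : Set C, IsTorsionFreeClass C H → G ⊆ H → H ⊆ F → H = G ∨ H = F

/-- The brick label of a Hasse arrow `T → U` of torsion classes:
the unique brick in `U^⊥ ∩ T`. -/
def IsBrickLabel (T U : Set C) (S : C) : Prop := IsBrick C S ∧ S ∈ RPerp C U ∩ T

/-- The brick label of a Hasse arrow `F → G` of torsion-free classes:
the unique brick in `^⊥G ∩ F`. -/
def IsBrickLabelTorf (F G : Set C) (S : C) : Prop := IsBrick C S ∧ S ∈ LPerp C G ∩ F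

/-- The left wide subcategory of a torsion class. -/
def WL (T : Set C) : Set C :=
  {X | X ∈ T ∧ ∀ ⦃Y : C⦄ (g : Y ⟶ X), Y ∈ T → kernel g ∈ T}

/-- The right wide subcategory of a torsion-free class. -/
def WR (F : Set C) : Set C :=
  {X | X ∈ F ∧ ∀ ⦃Y : C⦄ (f : X ⟶ Y), Y ∈ F → cokernel f ∈ F}

/-- A Serre subcategory of the abelian category given by a wide subcategory `W`:
closed under extensions, subobjects and quotients within `W`. -/
structure IsSerreIn (W S : Set C) : Prop where
  subset : S ⊆ W
  zero_mem : ∀ Z : C, IsZero Z → Z ∈ S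
  sub_mem : ∀ ⦃A X : C⦄ (f : A ⟶ X), Mono f → A ∈ W → X ∈ S → A ∈ S
  quot_mem : ∀ ⦃X B : C⦄ (f : X ⟶ B), Epi f → B ∈ W → X ∈ S → B ∈ S
  ext_mem : ∀ E : ShortComplex C, E.ShortExact → E.X₂ ∈ W →
    E.X₁ ∈ S → E.X₃ ∈ S → E.X₂ ∈ S

/-- A torsion class of the abelian category given by a wide subcategory `W`:
a subclass of `W` containing the zero objects and closed under quotients in `W`
and extensions. -/
structure IsTorsionClassIn (W X : Set C) : Prop where
  subset : X ⊆ W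
  zero_mem : ∀ Z : C, IsZero Z → Z ∈ X
  quot_mem : ∀ ⦃A B : C⦄ (f : A ⟶ B), Epi f → A ∈ X → B ∈ W → B ∈ X
  ext_mem : ∀ E : ShortComplex C, E.ShortExact → E.X₁ ∈ X → E.X₃ ∈ X → E.X₂ ∈ X

section AuxBasic

variable {C}

open CategoryTheory.Abelian

lemma aux_isZero_of_mono_zero {X Y : C} (f : X ⟶ Y) (hm : Mono f) (hz : f = 0) : IsZero X := by
  rw [IsZero.iff_id_eq_zero]
  have : 𝟙 X ≫ f = 0 ≫ f := by simp [hz]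
  exact (cancel_mono f).1 this

lemma aux_isZero_of_epi_zero {X Y : C} (f : X ⟶ Y) (he : Epi f) (hz : f = 0) : IsZero Y := by
  rw [IsZero.iff_id_eq_zero]
  have : f ≫ 𝟙 Y = f ≫ 0 := by simp [hz]
  exact (cancel_epi f).1 this

lemma aux_tors_iso {T : Set C} (hT : IsTorsionClass C T) {X Y : C} (e : X ≅ Y)
    (hX : X ∈ T) : Y ∈ T :=
  hT.quot_mem e.hom inferInstance hX

lemma aux_rperp_iso {U : Set C} {X Y : C} (e : X ≅ Y) (hX : X ∈ RPerp C U) :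
    Y ∈ RPerp C U := by
  intro A hA f
  have h1 : f ≫ e.inv = 0 := hX A hA (f ≫ e.inv)
  have : f = (f ≫ e.inv) ≫ e.hom := by simp
  rw [this, h1, zero_comp]

lemma aux_rperp_mono {U : Set C} {X Y : C} (f : X ⟶ Y) (hm : Mono f)
    (hY : Y ∈ RPerp C U) : X ∈ RPerp C U := by
  intro A hA g
  have : (g ≫ f) = 0 := hY A hA (g ≫ f)
  have h2 : g ≫ f = 0 ≫ f := by simp [this]
  exact (cancel_mono f).1 h2

lemma aux_rperp_ext {U : Set C} (E : ShortComplex C) (hE : E.ShortExact)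
    (h1 : E.X₁ ∈ RPerp C U) (h3 : E.X₃ ∈ RPerp C U) : E.X₂ ∈ RPerp C U := by
  intro A hA f
  have hfg : f ≫ E.g = 0 := h3 A hA (f ≫ E.g)
  obtain ⟨l, hl⟩ := KernelFork.IsLimit.lift' hE.fIsKernel f hfg
  have : l = 0 := h1 A hA l
  rw [← hl, this, zero_comp]

lemma aux_rperp_antitone {U V : Set C} (h : U ⊆ V) : RPerp C V ⊆ RPerp C U :=
  fun _ hX A hA f => hX A (h hA) f

lemma aux_isZero_of_mem_rperp_self {T : Set C} {X : C} (hX : X ∈ T)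
    (hX' : X ∈ RPerp C T) : IsZero X := by
  rw [IsZero.iff_id_eq_zero]
  exact hX' X hX (𝟙 X)

/-- The left perp of an object is a torsion class. -/
lemma aux_lperp_isTorsionClass (Z : C) :
    IsTorsionClass C {A | ∀ f : A ⟶ Z, f = 0} := by
  constructor
  · intro W hW f
    exact hW.eq_of_src f 0
  · intro A B f hf hA g
    have : f ≫ g = 0 := hA (f ≫ g)
    rw [← cancel_epi f, this, comp_zero]
  · intro E hE h1 h3 f
    have hfg : E.f ≫ f = 0 := h1 (E.f ≫ f)
    obtain ⟨l, hl⟩ := CokernelCofork.IsColimit.desc' hE.gIsCokernel f hfg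
    have : l = 0 := h3 l
    rw [← hl, this, comp_zero]

lemma aux_tors_inter {T₁ T₂ : Set C} (h1 : IsTorsionClass C T₁) (h2 : IsTorsionClass C T₂) :
    IsTorsionClass C (T₁ ∩ T₂) := by
  constructor
  · exact fun Z hZ => ⟨h1.zero_mem Z hZ, h2.zero_mem Z hZ⟩
  · exact fun A B f hf hA => ⟨h1.quot_mem f hf hA.1, h2.quot_mem f hf hA.2⟩
  · exact fun E hE hA hB => ⟨h1.ext_mem E hE hA.1 hB.1, h2.ext_mem E hE hA.2 hB.2⟩

lemma aux_torsClosure_isTorsionClass (S : Set C) : IsTorsionClass C (torsClosure C S) := by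
  constructor
  · intro Z hZ T' hT'
    exact hT'.1.zero_mem Z hZ
  · intro A B f hf hA T' hT'
    exact hT'.1.quot_mem f hf (hA T' hT')
  · intro E hE h1 h3 T' hT'
    exact hT'.1.ext_mem E hE (h1 T' hT') (h3 T' hT')

lemma aux_subset_torsClosure (S : Set C) : S ⊆ torsClosure C S :=
  fun X hX T' hT' => hT'.2 hX

lemma aux_torsClosure_min {S T : Set C} (hT : IsTorsionClass C T) (h : S ⊆ T) :
    torsClosure C S ⊆ T := fun X hX => hX T ⟨hT, h⟩

/-- The short complex `0 → ker f → X → Y → 0` for an epi `f` is short exact. -/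
lemma aux_kernel_shortExact {X Y : C} (f : X ⟶ Y) (hf : Epi f) :
    (ShortComplex.mk (kernel.ι f) f (kernel.condition f)).ShortExact := by
  apply ShortComplex.ShortExact.mk'
  · exact ShortComplex.exact_of_f_is_kernel _ (kernelIsKernel f)
  · infer_instance
  · exact hf

/-- The short complex `0 → X → Y → coker f → 0` for a mono `f` is short exact. -/
lemma aux_cokernel_shortExact {X Y : C} (f : X ⟶ Y) (hf : Mono f) :
    (ShortComplex.mk f (cokernel.π f) (cokernel.condition f)).ShortExact := by
  apply ShortComplex.ShortExact.mk'
  · exact ShortComplex.exact_of_g_is_cokernel _ (cokernelIsCokernel f)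
  · exact hf
  · infer_instance

end AuxBasic

section AuxAdd

variable {C}

/-- The splitting short exact sequence `0 → c 0 → ⨁ c → ⨁ (c ∘ succ) → 0`. -/
lemma aux_biproduct_fin_shortExact {n : ℕ} (c : Fin (n + 1) → C) :
    ∃ (E : ShortComplex C), E.ShortExact ∧ E.X₁ = c 0 ∧ E.X₂ = (⨁ c) ∧
      E.X₃ = (⨁ fun i : Fin n => c i.succ) := by
  have hzero : biproduct.ι c 0 ≫ biproduct.lift (fun i : Fin n => biproduct.π c i.succ) = 0 := by
    ext i
    simp [biproduct.ι_π_ne _ (Ne.symm (Fin.succ_ne_zero i))]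
  refine ⟨ShortComplex.mk (biproduct.ι c 0)
    (biproduct.lift (fun i : Fin n => biproduct.π c i.succ)) hzero, ?_, rfl, rfl, rfl⟩
  have spl : (ShortComplex.mk (biproduct.ι c 0)
      (biproduct.lift (fun i : Fin n => biproduct.π c i.succ)) hzero).Splitting := by
    refine ⟨biproduct.π c 0, biproduct.desc (fun i : Fin n => biproduct.ι c i.succ), ?_, ?_, ?_⟩
    · simp
    · ext i j
      simp [biproduct.ι_π, Fin.succ_inj]
    · apply biproduct.hom_ext'
      intro j
      induction j using Fin.cases with
      | zero =>
        simp [reassoc_of% hzero, biproduct.ι_π]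
      | succ i =>
        have hlift : biproduct.ι c i.succ ≫
            biproduct.lift (fun i : Fin n => biproduct.π c i.succ) =
            biproduct.ι (fun i : Fin n => c i.succ) i := by
          ext j
          simp [biproduct.ι_π, Fin.succ_inj]
        simp [reassoc_of% hlift, biproduct.ι_π_ne_assoc _ (Fin.succ_ne_zero i)]
  exact spl.shortExact

lemma aux_isZero_biproduct_fin_zero (c : Fin 0 → C) : IsZero (⨁ c) := by
  rw [IsZero.iff_id_eq_zero]
  apply biproduct.hom_ext
  intro j
  exact absurd j.2 (by simp)

/-- A class containing zeros, closed under iso and extensions, is closed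
under finite biproducts. -/
lemma aux_biproduct_mem {P : Set C}
    (h0 : ∀ Z : C, IsZero Z → Z ∈ P)
    (hext : ∀ E : ShortComplex C, E.ShortExact → E.X₁ ∈ P → E.X₃ ∈ P → E.X₂ ∈ P) :
    ∀ (n : ℕ) (c : Fin n → C), (∀ i, c i ∈ P) → (⨁ c) ∈ P := by
  intro n
  induction n with
  | zero => exact fun c _ => h0 _ (aux_isZero_biproduct_fin_zero c)
  | succ m ih =>
    intro c hc
    obtain ⟨E, hE, h1, h2, h3⟩ := aux_biproduct_fin_shortExact c
    rw [← h2]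
    apply hext E hE
    · rw [h1]; exact hc 0
    · rw [h3]; exact ih _ (fun i => hc i.succ)

lemma aux_addClosure_subset {L U T : Set C} (hT : IsTorsionClass C T)
    (hL : L ⊆ RPerp C U ∩ T) : AddClosure C L ⊆ RPerp C U ∩ T := by
  rintro X ⟨n, c, hc, f, hf⟩
  have hbi : (⨁ c) ∈ RPerp C U ∩ T := by
    apply aux_biproduct_mem (P := RPerp C U ∩ T)
      (fun Z hZ => ⟨fun A _ g => hZ.eq_of_tgt g 0, hT.zero_mem Z hZ⟩)
      (fun E hE h1 h3 => ⟨aux_rperp_ext E hE h1.1 h3.1, hT.ext_mem E hE h1.2 h3.2⟩)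
      n c (fun i => hL (hc i))
  obtain ⟨s⟩ := hf.exists_splitEpi
  haveI : IsSplitMono s.section_ := IsSplitMono.mk' ⟨f, s.id⟩
  exact ⟨aux_rperp_mono s.section_ inferInstance hbi.1,
    hT.quot_mem f (by haveI := hf; infer_instance) hbi.2⟩

lemma aux_single_mem_addClosure {L : Set C} {X : C} (hX : X ∈ L) : X ∈ AddClosure C L := by
  refine ⟨1, fun _ => X, fun _ => hX, biproduct.π (fun _ : Fin 1 => X) 0, ?_⟩
  exact ⟨⟨⟨biproduct.ι (fun _ : Fin 1 => X) 0, by simp⟩⟩⟩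

/-- Part A : `Filt L ⊆ RPerp U ∩ T`. -/
lemma aux_filt_subset {L U T : Set C} (hT : IsTorsionClass C T)
    (hL : L ⊆ RPerp C U ∩ T) : Filt C L ⊆ RPerp C U ∩ T := by
  intro X hX
  induction hX with
  | of_isZero X hX => exact ⟨fun A _ g => hX.eq_of_tgt g 0, hT.zero_mem X hX⟩
  | ext E hE h1 h3 ih =>
    have h3' := aux_addClosure_subset hT hL h3
    exact ⟨aux_rperp_ext E hE ih.1 h3'.1, hT.ext_mem E hE ih.2 h3'.2⟩
  | of_iso X Y e hX ih => exact ⟨aux_rperp_iso e ih.1, aux_tors_iso hT e ih.2⟩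

end AuxAdd

section AuxPL

variable {C}

open CategoryTheory.Abelian CategoryTheory.Abelian.Pseudoelement
open scoped Pseudoelement

/-- The kernel of an epi `E.g`-like map is isomorphic to `E.X₁`. -/
noncomputable def auxKerIso (E : ShortComplex C) (hE : E.ShortExact) : kernel E.g ≅ E.X₁ :=
  IsLimit.conePointUniqueUpToIso (kernelIsKernel E.g) hE.fIsKernel

noncomputable def auxCokerIso (E : ShortComplex C) (hE : E.ShortExact) : cokernel E.f ≅ E.X₃ :=
  IsColimit.coconePointUniqueUpToIso (cokernelIsCokernel E.f) hE.gIsCokernel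

/-- The preimage lemma: given an epi `c : Y ⟶ Z` and a short exact sequence
`0 → A → Z → Z' → 0`, the preimage `ker (c ≫ d)` of `A` in `Y` is an extension
of `A` by `ker c`. -/
lemma aux_preimage_shortExact {Y Z Z' A : C} (c : Y ⟶ Z) (hc : Epi c)
    {j : A ⟶ Z} {d : Z ⟶ Z'} {w : j ≫ d = 0}
    (hse : (ShortComplex.mk j d w).ShortExact) :
    ∃ (u : kernel (c ≫ d) ⟶ A) (v : kernel c ⟶ kernel (c ≫ d)) (wz : v ≫ u = 0),
      u ≫ j = kernel.ι (c ≫ d) ≫ c ∧ v ≫ kernel.ι (c ≫ d) = kernel.ι c ∧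
      (ShortComplex.mk v u wz).ShortExact := by
  haveI := hc
  haveI : Mono j := hse.mono_f
  haveI : Epi d := hse.epi_g
  obtain ⟨u, hu0⟩ := KernelFork.IsLimit.lift' hse.fIsKernel (kernel.ι (c ≫ d) ≫ c)
    (by rw [Category.assoc, kernel.condition])
  have hu : u ≫ j = kernel.ι (c ≫ d) ≫ c := hu0
  have hvw : kernel.ι c ≫ c ≫ d = 0 := by
    rw [← Category.assoc, kernel.condition, zero_comp]
  have hv : kernel.lift (c ≫ d) (kernel.ι c) hvw ≫ kernel.ι (c ≫ d) = kernel.ι c :=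
    kernel.lift_ι _ _ _
  have wz : kernel.lift (c ≫ d) (kernel.ι c) hvw ≫ u = 0 := by
    rw [← cancel_mono j, Category.assoc, hu, zero_comp, ← Category.assoc, hv,
      kernel.condition]
  have hexc : (ShortComplex.mk (kernel.ι c) c (kernel.condition c)).Exact :=
    ShortComplex.exact_of_f_is_kernel _ (kernelIsKernel c)
  have hexcd : (ShortComplex.mk (kernel.ι (c ≫ d)) (c ≫ d) (kernel.condition _)).Exact :=
    ShortComplex.exact_of_f_is_kernel _ (kernelIsKernel (c ≫ d))
  refine ⟨u, kernel.lift (c ≫ d) (kernel.ι c) hvw, wz, hu, hv, ?_⟩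
  apply ShortComplex.ShortExact.mk'
  · -- exactness in the middle, via pseudoelements
    apply exact_of_pseudo_exact
    intro b hb
    have hb' : pseudoApply u b = 0 := hb
    have h1 : pseudoApply c (pseudoApply (kernel.ι (c ≫ d)) b) = 0 := by
      rw [← Pseudoelement.comp_apply, ← hu, Pseudoelement.comp_apply, hb', apply_zero]
    obtain ⟨m, hm⟩ := pseudo_exact_of_exact hexc _ h1
    have hm' : pseudoApply (kernel.ι c) m = pseudoApply (kernel.ι (c ≫ d)) b := hm
    refine ⟨m, pseudo_injective_of_mono (kernel.ι (c ≫ d)) ?_⟩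
    show pseudoApply (kernel.ι (c ≫ d)) (pseudoApply (kernel.lift (c ≫ d) (kernel.ι c) hvw) m)
      = pseudoApply (kernel.ι (c ≫ d)) b
    rw [← Pseudoelement.comp_apply, hv, hm']
  · -- v is mono
    exact mono_of_mono_fac hv
  · -- u is epi
    apply epi_of_pseudo_surjective
    intro a
    obtain ⟨y, hy⟩ := pseudo_surjective_of_epi c (pseudoApply j a)
    have hyd : pseudoApply (c ≫ d) y = 0 := by
      rw [Pseudoelement.comp_apply, hy, ← Pseudoelement.comp_apply, w, Pseudoelement.zero_apply]
    obtain ⟨k, hk⟩ := pseudo_exact_of_exact hexcd _ hyd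
    have hk' : pseudoApply (kernel.ι (c ≫ d)) k = y := hk
    refine ⟨k, pseudo_injective_of_mono j ?_⟩
    show pseudoApply j (pseudoApply u k) = pseudoApply j a
    rw [← Pseudoelement.comp_apply, hu, Pseudoelement.comp_apply, hk', hy]

/-- The torsion radical: any object has a maximal subobject in a torsion class `V`,
whose quotient is in `RPerp V`. -/
lemma aux_radical [Noetherian C] {V : Set C} (hV : IsTorsionClass C V) (X : C) :
    ∃ (A Q : C) (i : A ⟶ X) (p : X ⟶ Q) (w : i ≫ p = 0),
      (ShortComplex.mk i p w).ShortExact ∧ A ∈ V ∧ Q ∈ RPerp C V := by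
  have hbot : (⊥ : Subobject X) ∈ {P : Subobject X | (P : C) ∈ V} :=
    hV.zero_mem _ ((isZero_zero C).of_iso Subobject.botCoeIsoZero)
  obtain ⟨P, hPV, hmax⟩ := (wellFounded_gt (α := Subobject X)).has_min
    {P : Subobject X | (P : C) ∈ V} ⟨⊥, hbot⟩
  have hse0 := aux_cokernel_shortExact P.arrow inferInstance
  refine ⟨(P : C), cokernel P.arrow, P.arrow, cokernel.π P.arrow, cokernel.condition _,
    hse0, hPV, ?_⟩
  intro A₀ hA₀ f
  by_contra hf
  have hI : ¬ IsZero (image f) := by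
    intro hz
    apply hf
    rw [← Limits.image.fac f, hz.eq_of_src (Limits.image.ι f) 0, comp_zero]
  have hIV : image f ∈ V := hV.quot_mem (factorThruImage f) inferInstance hA₀
  have hse : (ShortComplex.mk (Limits.image.ι f) (cokernel.π (Limits.image.ι f))
      (cokernel.condition _)).ShortExact :=
    aux_cokernel_shortExact _ inferInstance
  obtain ⟨u, v, wz, hu, hv, hPL⟩ :=
    aux_preimage_shortExact (cokernel.π P.arrow) inferInstance hse
  have hkercV : kernel (cokernel.π P.arrow) ∈ V :=
    aux_tors_iso hV (auxKerIso _ hse0).symm hPV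
  have hmidV : kernel (cokernel.π P.arrow ≫ cokernel.π (Limits.image.ι f)) ∈ V :=
    hV.ext_mem _ hPL hkercV hIV
  have hP'V : ((Subobject.mk (kernel.ι (cokernel.π P.arrow ≫ cokernel.π (Limits.image.ι f)))
      : Subobject X) : C) ∈ V :=
    aux_tors_iso hV (Subobject.underlyingIso _).symm hmidV
  have hle : P ≤ Subobject.mk (kernel.ι (cokernel.π P.arrow ≫ cokernel.π (Limits.image.ι f))) := by
    have hzz : P.arrow ≫ cokernel.π P.arrow ≫ cokernel.π (Limits.image.ι f) = 0 := by
      rw [← Category.assoc, cokernel.condition, zero_comp]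
    have h2 := Subobject.mk_le_mk_of_comm (kernel.lift _ P.arrow hzz) (kernel.lift_ι _ _ _)
    rwa [Subobject.mk_arrow] at h2
  have hnle : ¬ Subobject.mk (kernel.ι (cokernel.π P.arrow ≫ cokernel.π (Limits.image.ι f)))
      ≤ P := by
    intro hle'
    haveI : Mono (Limits.image.ι f) := hse.mono_f
    have hle'' : Subobject.mk (kernel.ι (cokernel.π P.arrow ≫ cokernel.π (Limits.image.ι f)))
        ≤ Subobject.mk P.arrow := by
      rwa [Subobject.mk_arrow]
    have hcomp := Subobject.ofMkLEMk_comp hle''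
    have hu0 : u = 0 := by
      rw [← cancel_mono (Limits.image.ι f), hu, ← hcomp, zero_comp, Category.assoc,
        cokernel.condition, comp_zero]
    haveI := hPL.epi_g
    exact hI (aux_isZero_of_epi_zero u inferInstance hu0)
  exact hmax _ hP'V (lt_of_le_of_ne hle (fun h => hnle (le_of_eq h.symm)))

end AuxPL

section AuxBrick

variable {C}

open CategoryTheory.Abelian CategoryTheory.Abelian.Pseudoelement
open scoped Pseudoelement

/-- A monic endomorphism of an artinian object is an isomorphism. -/
lemma aux_isIso_of_mono_endo [Artinian C] {B : C} (f : B ⟶ B) (hm : Mono f) : IsIso f := by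
  haveI := hm
  set fE : End B := f with hfE
  have hmono : ∀ n : ℕ, Mono ((fE ^ n : End B) : B ⟶ B) := by
    intro n
    induction n with
    | zero => rw [pow_zero, End.one_def]; infer_instance
    | succ m ih => rw [pow_succ, End.mul_def]; exact @mono_comp _ _ _ _ _ _ hm _ ih
  haveI := fun n => hmono n
  have ha : ∀ n : ℕ, (Subobject.mk ((fE ^ (n + 1) : End B) : B ⟶ B)) ≤
      Subobject.mk ((fE ^ n : End B) : B ⟶ B) := by
    intro n
    exact Subobject.mk_le_mk_of_comm f (by rw [pow_succ, End.mul_def])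
  obtain ⟨s, ⟨N, hN⟩, hmin⟩ := (wellFounded_lt (α := Subobject B)).has_min
    (Set.range fun n => Subobject.mk ((fE ^ n : End B) : B ⟶ B))
    ⟨_, ⟨0, rfl⟩⟩
  have hN' : Subobject.mk ((fE ^ N : End B) : B ⟶ B) = s := hN
  have heq : Subobject.mk ((fE ^ (N + 1) : End B) : B ⟶ B) = s := by
    have h1 := ha N
    rw [hN'] at h1
    by_contra hne
    exact hmin _ ⟨N + 1, rfl⟩ (lt_of_le_of_ne h1 hne)
  rw [← hN'] at heq
  have hge := le_of_eq heq.symm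
  have hw := Subobject.ofMkLEMk_comp hge
  set w := Subobject.ofMkLEMk _ _ hge with hwdef
  have hsplit : w ≫ f = 𝟙 B := by
    have h2 : (w ≫ f) ≫ ((fE ^ N : End B) : B ⟶ B) =
        𝟙 B ≫ ((fE ^ N : End B) : B ⟶ B) := by
      rw [Category.assoc, Category.id_comp]
      have hps : (f : B ⟶ B) ≫ ((fE ^ N : End B) : B ⟶ B) =
          ((fE ^ (N + 1) : End B) : B ⟶ B) := by
        rw [pow_succ, End.mul_def]
      rw [hps, hw]
    exact (cancel_mono _).1 h2
  haveI : Epi f := by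
    have : IsSplitEpi f := ⟨⟨⟨w, hsplit⟩⟩⟩
    infer_instance
  exact isIso_of_mono_of_epi f

/-- Minimal nonzero quotient of `X` within `RPerp U`: it exists, is a brick,
and any further quotient in `RPerp U` is an isomorphism. -/
lemma aux_min_quotient [Noetherian C] [Artinian C] {U : Set C} {X : C}
    (hX : X ∈ RPerp C U) (hnz : ¬ IsZero X) :
    ∃ (B : C) (π : X ⟶ B), Epi π ∧ ¬ IsZero B ∧ B ∈ RPerp C U ∧ IsBrick C B := by
  have hbotmem : ¬ IsZero (cokernel ((⊥ : Subobject X).arrow)) ∧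
      cokernel ((⊥ : Subobject X).arrow) ∈ RPerp C U := by
    have e : cokernel ((⊥ : Subobject X).arrow) ≅ X :=
      (cokernelIsoOfEq (Subobject.bot_arrow)) ≪≫ cokernelZeroIsoTarget
    exact ⟨fun hz => hnz (hz.of_iso e.symm), aux_rperp_mono e.hom inferInstance hX⟩
  obtain ⟨P, hPmem, hmax⟩ := (wellFounded_gt (α := Subobject X)).has_min
    {P : Subobject X | ¬ IsZero (cokernel P.arrow) ∧ cokernel P.arrow ∈ RPerp C U}
    ⟨⊥, hbotmem⟩
  -- the minimal quotient property
  have hmin : ∀ {Q : C} (e : cokernel P.arrow ⟶ Q), Epi e → ¬ IsZero Q →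
      Q ∈ RPerp C U → IsIso e := by
    intro Q e he hQnz hQperp
    haveI := he
    have hh : Epi (cokernel.π P.arrow ≫ e) := epi_comp _ _
    -- the subobject given by the kernel of the composite
    have hPle : P ≤ Subobject.mk (kernel.ι (cokernel.π P.arrow ≫ e)) := by
      have hzz : P.arrow ≫ cokernel.π P.arrow ≫ e = 0 := by
        rw [← Category.assoc, cokernel.condition, zero_comp]
      have h2 := Subobject.mk_le_mk_of_comm (kernel.lift _ P.arrow hzz) (kernel.lift_ι _ _ _)
      rwa [Subobject.mk_arrow] at h2
    -- the cokernel of that subobject is isomorphic to Q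
    have hQiso : cokernel ((Subobject.mk (kernel.ι (cokernel.π P.arrow ≫ e))).arrow) ≅ Q := by
      refine (cokernelIsoOfEq
        (Subobject.underlyingIso_hom_comp_eq_mk (kernel.ι (cokernel.π P.arrow ≫ e))).symm) ≪≫
        (cokernelEpiComp _ _) ≪≫ ?_
      exact IsColimit.coconePointUniqueUpToIso
        (cokernelIsCokernel (kernel.ι (cokernel.π P.arrow ≫ e)))
        (Abelian.epiIsCokernelOfKernel
          (KernelFork.ofι (kernel.ι (cokernel.π P.arrow ≫ e)) (kernel.condition _))
          (kernelIsKernel (cokernel.π P.arrow ≫ e)))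
    have hP''mem : ¬ IsZero (cokernel ((Subobject.mk
        (kernel.ι (cokernel.π P.arrow ≫ e))).arrow)) ∧
        cokernel ((Subobject.mk (kernel.ι (cokernel.π P.arrow ≫ e))).arrow) ∈ RPerp C U :=
      ⟨fun hz => hQnz (hz.of_iso hQiso.symm), aux_rperp_mono hQiso.hom inferInstance hQperp⟩
    have heq : Subobject.mk (kernel.ι (cokernel.π P.arrow ≫ e)) = P := by
      by_contra hne
      exact hmax _ hP''mem (lt_of_le_of_ne hPle (fun h => hne h.symm))
    -- from the equality, get a factorization of the kernel through P
    have hle'' : Subobject.mk (kernel.ι (cokernel.π P.arrow ≫ e)) ≤ Subobject.mk P.arrow := by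
      rw [Subobject.mk_arrow]; exact le_of_eq heq
    have hcomp := Subobject.ofMkLEMk_comp hle''
    -- e is mono on pseudoelements
    haveI : Mono e := by
      apply mono_of_zero_of_map_zero
      intro a ha
      obtain ⟨x, hx⟩ := pseudo_surjective_of_epi (cokernel.π P.arrow) a
      have hhx : pseudoApply (cokernel.π P.arrow ≫ e) x = 0 := by
        rw [Pseudoelement.comp_apply, hx, ha]
      have hexact : (ShortComplex.mk (kernel.ι (cokernel.π P.arrow ≫ e))
          (cokernel.π P.arrow ≫ e) (kernel.condition _)).Exact :=
        ShortComplex.exact_of_f_is_kernel _ (kernelIsKernel _)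
      obtain ⟨k, hk⟩ := pseudo_exact_of_exact hexact _ hhx
      have hk' : pseudoApply (kernel.ι (cokernel.π P.arrow ≫ e)) k = x := hk
      have hπx : pseudoApply (cokernel.π P.arrow) x = 0 := by
        rw [← hk', ← Pseudoelement.comp_apply, ← hcomp, Category.assoc,
          cokernel.condition, comp_zero, Pseudoelement.zero_apply]
      rw [← hx, hπx]
    exact isIso_of_mono_of_epi e
  refine ⟨cokernel P.arrow, cokernel.π P.arrow, inferInstance, hPmem.1, hPmem.2, hPmem.1, ?_⟩
  -- brick property
  intro f
  by_cases hf0 : f = 0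
  · exact Or.inl hf0
  · right
    have hInz : ¬ IsZero (image f) := by
      intro hz
      apply hf0
      rw [← Limits.image.fac f, hz.eq_of_src (Limits.image.ι f) 0, comp_zero]
    have hIperp : image f ∈ RPerp C U :=
      aux_rperp_mono (Limits.image.ι f) inferInstance hPmem.2
    haveI : IsIso (factorThruImage f) :=
      hmin (factorThruImage f) inferInstance hInz hIperp
    have hfm : Mono f := by
      rw [← Limits.image.fac f]
      infer_instance
    exact aux_isIso_of_mono_endo f hfm

/-- For a Hasse arrow `V → U` and a nonzero `Z ∈ RPerp U ∩ V`, every object of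
`V \ U` admits a nonzero map to `Z`. -/
lemma aux_cover_hom {U V : Set C} (hArr : IsHasseArrow C V U) {Z : C}
    (hZV : Z ∈ V) (hZperp : Z ∈ RPerp C U) (hZnz : ¬ IsZero Z)
    {Y : C} (hYV : Y ∈ V) (hYnU : Y ∉ U) : ∃ f : Y ⟶ Z, f ≠ 0 := by
  obtain ⟨hV, hU, hUV, hdich⟩ := hArr
  have hD : IsTorsionClass C (V ∩ {A | ∀ f : A ⟶ Z, f = 0}) :=
    aux_tors_inter hV (aux_lperp_isTorsionClass Z)
  have hUD : U ⊆ V ∩ {A | ∀ f : A ⟶ Z, f = 0} :=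
    fun A hA => ⟨hUV.1 hA, fun f => hZperp A hA f⟩
  have hDV : V ∩ {A | ∀ f : A ⟶ Z, f = 0} ⊆ V := Set.inter_subset_left
  rcases hdich _ hD hUD hDV with hDU | hDV'
  · by_contra hno
    push_neg at hno
    have : Y ∈ V ∩ {A | ∀ f : A ⟶ Z, f = 0} := ⟨hYV, fun f => hno f⟩
    rw [hDU] at this
    exact hYnU this
  · exfalso
    have hZD : Z ∈ V ∩ {A | ∀ f : A ⟶ Z, f = 0} := by rw [hDV']; exact hZV
    exact hZnz (aux_isZero_of_mem_rperp_self (T := {Z}) rfl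
      (fun A hA f => by rw [Set.mem_singleton_iff] at hA; subst hA; exact hZD.2 f))
end AuxBrick

section AuxKC

variable {C}

open CategoryTheory.Abelian CategoryTheory.Abelian.Pseudoelement
open scoped Pseudoelement

/-- Key lemma: for a Hasse arrow `V → U`, `X ∈ RPerp U ∩ V` and an epi `π : X ⟶ B`
onto a brick `B ∈ RPerp U`, the kernel of `π` lies in `V` (and in `RPerp U`). -/
lemma aux_kernel_mem_cover [Noetherian C] {U V : Set C} (hArr : IsHasseArrow C V U)
    {X B : C} (hXV : X ∈ V) (hXperp : X ∈ RPerp C U) (π : X ⟶ B) (hπ : Epi π)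
    (hBnz : ¬ IsZero B) (hBperp : B ∈ RPerp C U) (hBbrick : IsBrick C B) :
    kernel π ∈ V ∧ kernel π ∈ RPerp C U := by
  haveI := hπ
  obtain ⟨hV, hU, hUV, hdich⟩ := hArr
  have hKperp : kernel π ∈ RPerp C U := aux_rperp_mono (kernel.ι π) inferInstance hXperp
  refine ⟨?_, hKperp⟩
  obtain ⟨t, Q, τ, ρ, wtρ, hseT, htV, hQperp⟩ := aux_radical hV (kernel π)
  haveI : Mono τ := hseT.mono_f
  haveI : Epi ρ := hseT.epi_g
  haveI : Mono (τ ≫ kernel.ι π) := mono_comp _ _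
  -- the pushout X₁ = X / t
  obtain ⟨qbar, hqbar0⟩ := CokernelCofork.IsColimit.desc' hseT.gIsCokernel
    (kernel.ι π ≫ cokernel.π (τ ≫ kernel.ι π))
    (by rw [← Category.assoc, cokernel.condition])
  have hqbar : ρ ≫ qbar = kernel.ι π ≫ cokernel.π (τ ≫ kernel.ι π) := hqbar0
  have hdesczero : (τ ≫ kernel.ι π) ≫ π = 0 := by
    rw [Category.assoc, kernel.condition, comp_zero]
  have hdesc : cokernel.π (τ ≫ kernel.ι π) ≫ cokernel.desc _ π hdesczero = π :=
    cokernel.π_desc _ _ _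
  have wE : qbar ≫ cokernel.desc _ π hdesczero = 0 := by
    rw [← cancel_epi ρ, ← Category.assoc, hqbar, Category.assoc, hdesc,
      kernel.condition, comp_zero]
  have hexcoker : (ShortComplex.mk (τ ≫ kernel.ι π) (cokernel.π (τ ≫ kernel.ι π))
      (cokernel.condition _)).Exact :=
    ShortComplex.exact_of_g_is_cokernel _ (cokernelIsCokernel _)
  have hexker : (ShortComplex.mk (kernel.ι π) π (kernel.condition π)).Exact :=
    ShortComplex.exact_of_f_is_kernel _ (kernelIsKernel π)
  have hse' : (ShortComplex.mk qbar (cokernel.desc _ π hdesczero) wE).ShortExact := by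
    apply ShortComplex.ShortExact.mk'
    · apply exact_of_pseudo_exact
      intro b hb
      have hb' : pseudoApply (cokernel.desc _ π hdesczero) b = 0 := hb
      obtain ⟨x, hx⟩ := pseudo_surjective_of_epi (cokernel.π (τ ≫ kernel.ι π)) b
      have hπx : pseudoApply π x = 0 := by
        rw [← hdesc, Pseudoelement.comp_apply, hx, hb']
      obtain ⟨kk, hkk⟩ := pseudo_exact_of_exact hexker _ hπx
      have hkk' : pseudoApply (kernel.ι π) kk = x := hkk
      refine ⟨pseudoApply ρ kk, ?_⟩
      show pseudoApply qbar (pseudoApply ρ kk) = b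
      rw [← Pseudoelement.comp_apply, hqbar, Pseudoelement.comp_apply, hkk', hx]
    · apply mono_of_zero_of_map_zero
      intro q hq0
      obtain ⟨kk, hkk⟩ := pseudo_surjective_of_epi ρ q
      have h1 : pseudoApply (cokernel.π (τ ≫ kernel.ι π)) (pseudoApply (kernel.ι π) kk)
          = 0 := by
        rw [← Pseudoelement.comp_apply, ← hqbar, Pseudoelement.comp_apply, hkk, hq0]
      obtain ⟨s, hs⟩ := pseudo_exact_of_exact hexcoker _ h1
      have hs' : pseudoApply (τ ≫ kernel.ι π) s = pseudoApply (kernel.ι π) kk := hs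
      have hτs : pseudoApply τ s = kk := by
        apply pseudo_injective_of_mono (kernel.ι π)
        rw [← Pseudoelement.comp_apply, hs']
      rw [← hkk, ← hτs, ← Pseudoelement.comp_apply, wtρ, Pseudoelement.zero_apply]
    · exact epi_of_epi_fac hdesc
  -- memberships for X₁
  have hX₁V : cokernel (τ ≫ kernel.ι π) ∈ V :=
    hV.quot_mem (cokernel.π (τ ≫ kernel.ι π)) inferInstance hXV
  have hQperpU : Q ∈ RPerp C U := aux_rperp_antitone hUV.1 hQperp
  have hX₁perp : cokernel (τ ≫ kernel.ι π) ∈ RPerp C U :=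
    aux_rperp_ext _ hse' hQperpU hBperp
  have hX₁nz : ¬ IsZero (cokernel (τ ≫ kernel.ι π)) := by
    intro hz
    exact hBnz (aux_isZero_of_epi_zero (cokernel.desc _ π hdesczero) hse'.epi_g
      (hz.eq_of_src _ 0))
  have hBV : B ∈ V := hV.quot_mem π hπ hXV
  have hBnU : B ∉ U := fun hBU => hBnz (aux_isZero_of_mem_rperp_self hBU hBperp)
  obtain ⟨f, hfnz⟩ := aux_cover_hom ⟨hV, hU, hUV, hdich⟩ hX₁V hX₁perp hX₁nz hBV hBnU
  have hQzero : IsZero Q := by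
    rcases hBbrick.2 (f ≫ cokernel.desc _ π hdesczero) with hg0 | hgiso
    · exfalso
      obtain ⟨l, hl⟩ := KernelFork.IsLimit.lift' hse'.fIsKernel f hg0
      have hl' : l ≫ qbar = f := hl
      have hl0 : l = 0 := hQperp B hBV l
      exact hfnz (by rw [← hl', hl0, zero_comp])
    · haveI := hgiso
      have hσ : (inv (f ≫ cokernel.desc _ π hdesczero) ≫ f) ≫
          cokernel.desc _ π hdesczero = 𝟙 B := by
        rw [Category.assoc, IsIso.inv_comp_eq]
        simp
      have spl := ShortComplex.Splitting.ofExactOfSection _ hse'.exact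
        (inv (f ≫ cokernel.desc _ π hdesczero) ≫ f) hσ hse'.mono_f
      haveI : IsSplitEpi spl.r := ⟨⟨⟨qbar, spl.f_r⟩⟩⟩
      have hQV : Q ∈ V := hV.quot_mem spl.r inferInstance hX₁V
      exact aux_isZero_of_mem_rperp_self hQV hQperp
  -- hence ρ = 0 and τ is an isomorphism
  have hρ0 : ρ = 0 := hQzero.eq_of_tgt ρ 0
  haveI hτepi : Epi τ := by
    constructor
    intro W α β hcomp
    obtain ⟨γ, hγ⟩ := CokernelCofork.IsColimit.desc' hseT.gIsCokernel (α - β)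
      (by rw [Preadditive.comp_sub, hcomp, sub_self])
    have hγ' : ρ ≫ γ = α - β := hγ
    have : α - β = 0 := by rw [← hγ', hρ0, zero_comp]
    rw [← sub_eq_zero]
    exact this
  haveI : IsIso τ := isIso_of_mono_of_epi τ
  exact aux_tors_iso hV (asIso τ) htV

/-- The single-cover theorem: if `V → U` is a Hasse arrow, every `X ∈ RPerp U ∩ V`
is filtered by the brick labels of the arrow. -/
lemma aux_sct [Noetherian C] [Artinian C] {U V : Set C} (hArr : IsHasseArrow C V U)
    {L : Set C} (hlab : ∀ S : C, IsBrickLabel C V U S → S ∈ L) :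
    ∀ {X : C}, X ∈ RPerp C U → X ∈ V → FiltMem C L X := by
  have hV := hArr.1
  suffices h : ∀ (X₀ : C) (P : Subobject X₀), (P : C) ∈ RPerp C U → (P : C) ∈ V →
      FiltMem C L (P : C) by
    intro X hXperp hXV
    have e : ((Subobject.mk (𝟙 X) : Subobject X) : C) ≅ X := Subobject.underlyingIso (𝟙 X)
    exact FiltMem.of_iso _ _ e (h X (Subobject.mk (𝟙 X))
      (aux_rperp_iso e.symm hXperp) (aux_tors_iso hV e.symm hXV))
  intro X₀
  intro P
  induction P using WellFounded.induction (wellFounded_lt (α := Subobject X₀)) with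
  | _ P IH =>
  intro hPperp hPV
  by_cases hz : IsZero (P : C)
  · exact FiltMem.of_isZero _ hz
  obtain ⟨B, π, hπ, hBnz, hBperp, hBbrick⟩ := aux_min_quotient hPperp hz
  obtain ⟨hKV, hKperp⟩ := aux_kernel_mem_cover hArr hPV hPperp π hπ hBnz hBperp hBbrick
  have hBV : B ∈ V := hV.quot_mem π hπ hPV
  have hBL : B ∈ L := hlab B ⟨hBbrick, hBperp, hBV⟩
  haveI : Mono (kernel.ι π ≫ P.arrow) := mono_comp _ _
  have hle : Subobject.mk (kernel.ι π ≫ P.arrow) ≤ P := by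
    have h2 := Subobject.mk_le_mk_of_comm (g := kernel.ι π)
      (f₁ := kernel.ι π ≫ P.arrow) (f₂ := P.arrow) rfl
    rwa [Subobject.mk_arrow] at h2
  have hnle : ¬ P ≤ Subobject.mk (kernel.ι π ≫ P.arrow) := by
    intro hle'
    have hle'' : Subobject.mk P.arrow ≤ Subobject.mk (kernel.ι π ≫ P.arrow) := by
      rwa [Subobject.mk_arrow]
    have hw := Subobject.ofMkLEMk_comp hle''
    have hid : (Subobject.ofMkLEMk _ _ hle'' ≫ kernel.ι π) ≫ P.arrow = 𝟙 _ ≫ P.arrow := by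
      rw [Category.assoc, hw, Category.id_comp]
    have hsplit : Subobject.ofMkLEMk _ _ hle'' ≫ kernel.ι π = 𝟙 _ :=
      (cancel_mono P.arrow).1 hid
    haveI : IsSplitEpi (kernel.ι π) := ⟨⟨⟨_, hsplit⟩⟩⟩
    have hπ0 : π = 0 := by
      rw [← cancel_epi (kernel.ι π), kernel.condition, comp_zero]
    exact hBnz (aux_isZero_of_epi_zero π hπ hπ0)
  have hlt : Subobject.mk (kernel.ι π ≫ P.arrow) < P := lt_of_le_of_ne hle
    (fun h => hnle (le_of_eq h.symm))
  have e : ((Subobject.mk (kernel.ι π ≫ P.arrow) : Subobject X₀) : C) ≅ kernel π :=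
    Subobject.underlyingIso _
  have hfilt : FiltMem C L ((Subobject.mk (kernel.ι π ≫ P.arrow) : Subobject X₀) : C) :=
    IH _ hlt (aux_rperp_iso e.symm hKperp) (aux_tors_iso hV e.symm hKV)
  have hfiltK : FiltMem C L (kernel π) := FiltMem.of_iso _ _ e hfilt
  exact FiltMem.ext _ (aux_kernel_shortExact π hπ) hfiltK (aux_single_mem_addClosure hBL)

end AuxKC

section AuxFinal

variable {C}

open CategoryTheory.Abelian CategoryTheory.Abelian.Pseudoelement
open scoped Pseudoelement

/-- `Filt` is closed under extensions. -/
lemma aux_filt_ext_aux {L : Set C} : ∀ {Z : C}, FiltMem C L Z →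
    ∀ E : ShortComplex C, E.ShortExact → FiltMem C L E.X₁ → (E.X₃ ≅ Z) →
      FiltMem C L E.X₂ := by
  intro Z hZ
  induction hZ with
  | of_isZero Z hz =>
    intro E hE h1 e
    have hX₃ : IsZero E.X₃ := hz.of_iso e
    have hg0 : E.g = 0 := hX₃.eq_of_tgt E.g 0
    haveI : Mono E.f := hE.mono_f
    haveI : Epi E.f := hE.exact.epi_f hg0
    haveI : IsIso E.f := isIso_of_mono_of_epi E.f
    exact FiltMem.of_iso _ _ (asIso E.f) h1
  | of_iso A A' e' hA ih =>
    intro E hE h1 e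
    exact ih E hE h1 (e ≪≫ e'.symm)
  | ext E' hE' h1' hAdd ih =>
    intro E hE h1 e
    haveI := hE.epi_g
    have hcepi : Epi (E.g ≫ e.hom) := epi_comp _ _
    have hse'' : (ShortComplex.mk E'.f E'.g E'.zero).ShortExact := hE'
    obtain ⟨u, v, wz, hu, hv, hPL⟩ := aux_preimage_shortExact (E.g ≫ e.hom) hcepi hse''
    -- kernel of the composite epi is iso to E.X₁
    have κ : kernel (E.g ≫ e.hom) ≅ E.X₁ :=
      (kernelCompMono E.g e.hom) ≪≫ auxKerIso E hE
    have hfk : FiltMem C L (kernel (E.g ≫ e.hom)) := FiltMem.of_iso _ _ κ.symm h1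
    have hmid : FiltMem C L (kernel ((E.g ≫ e.hom) ≫ E'.g)) :=
      ih (ShortComplex.mk v u wz) hPL hfk (Iso.refl _)
    haveI : Epi ((E.g ≫ e.hom) ≫ E'.g) := by haveI := hE'.epi_g; exact epi_comp _ _
    exact FiltMem.ext (ShortComplex.mk (kernel.ι ((E.g ≫ e.hom) ≫ E'.g))
      ((E.g ≫ e.hom) ≫ E'.g) (kernel.condition _))
      (aux_kernel_shortExact ((E.g ≫ e.hom) ≫ E'.g) inferInstance) hmid hAdd

lemma aux_filt_ext {L : Set C} (E : ShortComplex C) (hE : E.ShortExact)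
    (h1 : FiltMem C L E.X₁) (h3 : FiltMem C L E.X₃) : FiltMem C L E.X₂ :=
  aux_filt_ext_aux h3 E hE h1 (Iso.refl _)

/-- The hard inclusion. -/
lemma aux_assembly [Noetherian C] [Artinian C] (U T : Set C)
    (hU : IsTorsionClass C U) (hT : IsTorsionClass C T) (hUT : U ⊆ T)
    (hjoin : T = torsClosure C (U ∪ ⋃₀ {V : Set C | V ⊆ T ∧ IsHasseArrow C V U})) :
    ∀ {X : C}, X ∈ RPerp C U → X ∈ T →
      FiltMem C {S : C | ∃ V : Set C, V ⊆ T ∧ IsHasseArrow C V U ∧ IsBrickLabel C V U S} X := by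
  set L := {S : C | ∃ V : Set C, V ⊆ T ∧ IsHasseArrow C V U ∧ IsBrickLabel C V U S} with hL
  suffices h : ∀ (X₀ : C) (N : Subobject X₀) (Y : C) (p : X₀ ⟶ Y), Epi p →
      N = Subobject.mk (kernel.ι p) → Y ∈ RPerp C U → Y ∈ T → FiltMem C L Y by
    intro X hXperp hXT
    exact h X (Subobject.mk (kernel.ι (𝟙 X))) X (𝟙 X) inferInstance rfl hXperp hXT
  intro X₀ N
  induction N using WellFounded.induction (wellFounded_gt (α := Subobject X₀)) with
  | _ N IH =>
  intro Y p hp hN hYperp hYT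
  haveI := hp
  by_cases hz : IsZero Y
  · exact FiltMem.of_isZero _ hz
  -- Step 1: find a cover V and a nonzero map from V to Y
  have hstep1 : ∃ V : Set C, (V ⊆ T ∧ IsHasseArrow C V U) ∧
      ∃ (A : C) (g : A ⟶ Y), A ∈ V ∧ g ≠ 0 := by
    by_contra hno
    have hTsub : T ⊆ {A : C | ∀ f : A ⟶ Y, f = 0} := by
      rw [hjoin]
      apply aux_torsClosure_min (aux_lperp_isTorsionClass Y)
      rintro A (hA | hA)
      · exact fun f => hYperp A hA f
      · obtain ⟨V, hVmem, hAV⟩ := hA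
        intro f
        by_contra hf
        exact hno ⟨V, ⟨hVmem.1, hVmem.2⟩, A, f, hAV, hf⟩
    apply hz
    rw [IsZero.iff_id_eq_zero]
    exact hTsub hYT (𝟙 Y)
  obtain ⟨V, ⟨hVT, hArr⟩, A, g, hAV, hgnz⟩ := hstep1
  have hVtors := hArr.1
  have hUsubV : U ⊆ V := hArr.2.2.1.1
  -- Step 2: the V-torsion radical M of Y
  obtain ⟨M, Y₁, i, cmap, w1, hse1, hMV, hY₁perpV⟩ := aux_radical hVtors Y
  haveI : Mono i := hse1.mono_f
  haveI : Epi cmap := hse1.epi_g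
  have hMnz : ¬ IsZero M := by
    intro hzM
    have hgc : g ≫ cmap = 0 := hY₁perpV A hAV (g ≫ cmap)
    obtain ⟨l, hl⟩ := KernelFork.IsLimit.lift' hse1.fIsKernel g hgc
    have hl' : l ≫ i = g := hl
    exact hgnz (by rw [← hl', hzM.eq_of_tgt l 0, zero_comp])
  -- Step 3: the U-torsion radical of Y₁
  obtain ⟨tU, Y₂, jmap, d, w2, hse2, htUU, hY₂perpU⟩ := aux_radical hU Y₁
  haveI : Epi d := hse2.epi_g
  -- Step 4: the preimage Y' of tU in Y
  have hse2' : (ShortComplex.mk jmap d w2).ShortExact := hse2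
  obtain ⟨u, v, wz, hu, hv, hPL⟩ := aux_preimage_shortExact cmap inferInstance hse2'
  have κ : kernel cmap ≅ M := auxKerIso _ hse1
  have hY'V : kernel (cmap ≫ d) ∈ V :=
    hVtors.ext_mem _ hPL (aux_tors_iso hVtors κ.symm hMV) (hUsubV htUU)
  have hY'perp : kernel (cmap ≫ d) ∈ RPerp C U :=
    aux_rperp_mono (kernel.ι (cmap ≫ d)) inferInstance hYperp
  have hfiltY' : FiltMem C L (kernel (cmap ≫ d)) :=
    aux_sct hArr (fun S hS => show ∃ V' : Set C, V' ⊆ T ∧ IsHasseArrow C V' U ∧ IsBrickLabel C V' U S from ⟨V, hVT, hArr, hS⟩) hY'perp hY'V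
  -- Step 5: recursion on Y₂
  haveI : Epi (cmap ≫ d) := epi_comp _ _
  haveI : Epi (p ≫ cmap ≫ d) := epi_comp _ _
  have hY₂T : Y₂ ∈ T := hT.quot_mem (cmap ≫ d) inferInstance hYT
  have hle : N ≤ Subobject.mk (kernel.ι (p ≫ cmap ≫ d)) := by
    rw [hN]
    have hzz : kernel.ι p ≫ p ≫ cmap ≫ d = 0 := by
      rw [← Category.assoc, kernel.condition, zero_comp]
    exact Subobject.mk_le_mk_of_comm (kernel.lift _ (kernel.ι p) hzz) (kernel.lift_ι _ _ _)
  have hnle : ¬ Subobject.mk (kernel.ι (p ≫ cmap ≫ d)) ≤ N := by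
    intro hle'
    rw [hN] at hle'
    have hw := Subobject.ofMkLEMk_comp hle'
    apply hMnz
    apply aux_isZero_of_mono_zero i inferInstance
    apply zero_morphism_ext
    intro m
    have him0 : pseudoApply cmap (pseudoApply i m) = 0 := by
      rw [← Pseudoelement.comp_apply, w1, Pseudoelement.zero_apply]
    have him : pseudoApply (cmap ≫ d) (pseudoApply i m) = 0 := by
      rw [Pseudoelement.comp_apply, him0, apply_zero]
    obtain ⟨x, hx⟩ := pseudo_surjective_of_epi p (pseudoApply i m)
    have hx2 : pseudoApply (p ≫ cmap ≫ d) x = 0 := by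
      rw [Pseudoelement.comp_apply, hx, him]
    have hexk : (ShortComplex.mk (kernel.ι (p ≫ cmap ≫ d)) (p ≫ cmap ≫ d)
        (kernel.condition _)).Exact :=
      ShortComplex.exact_of_f_is_kernel _ (kernelIsKernel _)
    obtain ⟨k, hk⟩ := pseudo_exact_of_exact hexk _ hx2
    have hk' : pseudoApply (kernel.ι (p ≫ cmap ≫ d)) k = x := hk
    have hpx : pseudoApply p x = 0 := by
      rw [← hk', ← Pseudoelement.comp_apply, ← hw, Category.assoc, kernel.condition,
        comp_zero, Pseudoelement.zero_apply]
    rw [← hx]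
    exact hpx
  have hlt : Subobject.mk (kernel.ι (p ≫ cmap ≫ d)) > N :=
    lt_of_le_of_ne hle (fun h => hnle (le_of_eq h.symm))
  have hfiltY₂ : FiltMem C L Y₂ :=
    IH _ hlt Y₂ (p ≫ cmap ≫ d) inferInstance rfl hY₂perpU hY₂T
  -- Step 6: assemble
  exact aux_filt_ext _ (aux_kernel_shortExact (cmap ≫ d) inferInstance) hfiltY' hfiltY₂

end AuxFinal

/-- For a join interval `[U,T]` (i.e. `T` is the join of `U` together with all `V` in the
interval admitting a Hasse arrow `V → U`), the subcategory `U^⊥ ∩ T` equals `Filt ℒ`,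
where `ℒ` is the set of labels of these arrows `V → U`. -/
theorem stmt_12 [Noetherian C] [Artinian C]
    (U T : Set C) (hU : IsTorsionClass C U) (hT : IsTorsionClass C T) (hUT : U ⊆ T)
    (hjoin : T = torsClosure C
      (U ∪ ⋃₀ {V : Set C | V ⊆ T ∧ IsHasseArrow C V U})) :
    RPerp C U ∩ T =
      Filt C {S : C | ∃ V : Set C, V ⊆ T ∧ IsHasseArrow C V U ∧ IsBrickLabel C V U S} := by
  apply Set.eq_of_subset_of_subset
  · rintro X ⟨hXperp, hXT⟩
    exact aux_assembly U T hU hT hUT hjoin hXperp hXT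
  · apply aux_filt_subset hT
    rintro S ⟨V, hVT, hArr, hbrick, hSperp, hSV⟩
    exact ⟨hSperp, hVT hSV⟩
end

section
/- Let 𝒜 be an abelian length category, 𝒯 a torsion class, and W_L(𝒯) := {X ∈ 𝒯 : for all Y ∈ 𝒯 and all g : Y → X, ker g ∈ 𝒯} the left wide subcategory. For any Serre subcategory 𝒲 of W_L(𝒯) and any morphism f : X → Y with X ∈ 𝒯 and Y ∈ F(𝒲), we have im f ∈ 𝒲 and ker f ∈ 𝒯. -/
open CategoryTheory CategoryTheory.Limits

universe v u

attribute [local instance] CategoryTheory.Abelian.hasFiniteBiproducts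

variable (C : Type u) [Category.{v} C] [Abelian C]

section Helpers14

variable {C}

noncomputable def kernelCongr14 {X Y : C} {f g : X ⟶ Y} (h : f = g) : kernel f ≅ kernel g := by
  subst h; exact Iso.refl _

noncomputable def imageCongr14 {X Y : C} {f g : X ⟶ Y} (h : f = g) : image f ≅ image g := by
  subst h; exact Iso.refl _

/-- Torsion classes are closed under isomorphisms. -/
lemma torsIso14 {T : Set C} (hT : IsTorsionClass C T) {A B : C} (e : A ≅ B) (hA : A ∈ T) :
    B ∈ T :=
  hT.quot_mem e.hom inferInstance hA

/-- The kernel of the restriction of `f` to the kernel of `f ≫ p` is the kernel of `f`. -/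
noncomputable def kerKerι14 {X Y Z : C} (f : X ⟶ Y) (p : Y ⟶ Z) :
    kernel (kernel.ι (f ≫ p) ≫ f) ≅ kernel f where
  hom := kernel.lift f (kernel.ι _ ≫ kernel.ι (f ≫ p))
    (by rw [Category.assoc, kernel.condition])
  inv := kernel.lift _ (kernel.lift (f ≫ p) (kernel.ι f)
      (by rw [← Category.assoc, kernel.condition, zero_comp]))
    (by rw [← Category.assoc, kernel.lift_ι, kernel.condition])
  hom_inv_id := by
    rw [← cancel_mono (kernel.ι (kernel.ι (f ≫ p) ≫ f)), ← cancel_mono (kernel.ι (f ≫ p))]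
    simp
  inv_hom_id := by
    rw [← cancel_mono (kernel.ι f)]
    simp

/-- Postcomposition with a mono does not change the image. -/
noncomputable def imageCompMonoIso14 {X A B : C} (f : X ⟶ A) (ι : A ⟶ B) [Mono ι] :
    image f ≅ image (f ≫ ι) := by
  have w : (𝟙 X) ≫ (f ≫ ι) = f ≫ ι := Category.id_comp _
  let v : image f ⟶ image (f ≫ ι) := image.map (Arrow.homMk' _ _ w)
  have hv : v ≫ image.ι (f ≫ ι) = image.ι f ≫ ι := image.map_homMk'_ι w
  have hmono : Mono (v ≫ image.ι (f ≫ ι)) := by rw [hv]; exact mono_comp _ _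
  have : Mono v := mono_of_mono v (image.ι (f ≫ ι))
  have hfac : factorThruImage f ≫ v = 𝟙 X ≫ factorThruImage (f ≫ ι) :=
    image.factor_map (Arrow.homMk' _ _ w)
  rw [Category.id_comp] at hfac
  have hepi : Epi (factorThruImage f ≫ v) := by rw [hfac]; infer_instance
  have : Epi v := epi_of_epi (factorThruImage f) v
  have : IsIso v := isIso_of_mono_of_epi v
  exact asIso v

/-- `W_L(T)` is closed under isomorphisms. -/
lemma WLIso14 {T : Set C} (hT : IsTorsionClass C T) {A B : C} (e : A ≅ B)
    (hA : A ∈ WL C T) : B ∈ WL C T := by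
  refine ⟨torsIso14 hT e hA.1, fun Z g hZ => ?_⟩
  exact torsIso14 hT (kernelCompMono g e.inv) (hA.2 (g ≫ e.inv) hZ)

/-- A Serre subcategory of `W_L(T)` is closed under isomorphisms. -/
lemma WIso14 {T W : Set C} (hT : IsTorsionClass C T) (hW : IsSerreIn C (WL C T) W)
    {A B : C} (e : A ≅ B) (hA : A ∈ W) : B ∈ W :=
  hW.quot_mem e.hom inferInstance (WLIso14 hT e (hW.subset hA)) hA

/-- `W_L(T)` is closed under extensions. -/
lemma WLExt14 {T : Set C} (hT : IsTorsionClass C T) (E : ShortComplex C)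
    (hE : E.ShortExact) (h1 : E.X₁ ∈ WL C T) (h3 : E.X₃ ∈ WL C T) :
    E.X₂ ∈ WL C T := by
  haveI := hE.mono_f
  refine ⟨hT.ext_mem E hE h1.1 h3.1, fun Z g hZ => ?_⟩
  have hK : kernel (g ≫ E.g) ∈ T := h3.2 (g ≫ E.g) hZ
  have w : (kernel.ι (g ≫ E.g) ≫ g) ≫ E.g = 0 := by
    rw [Category.assoc, kernel.condition]
  obtain ⟨q, hq⟩ := hE.exact.lift' (kernel.ι (g ≫ E.g) ≫ g) w
  have hker : kernel q ∈ T := h1.2 q hK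
  have h2 : kernel (q ≫ E.f) ∈ T := torsIso14 hT (kernelCompMono q E.f).symm hker
  exact torsIso14 hT (kernelCongr14 hq ≪≫ kerKerι14 g E.g) h2

/-- The base case: morphisms from `T` to objects of `W`. -/
lemma baseCase14 {T W : Set C} (hT : IsTorsionClass C T) (hW : IsSerreIn C (WL C T) W)
    {X Y : C} (hYW : Y ∈ W) (hX : X ∈ T) (f : X ⟶ Y) :
    image f ∈ W ∧ kernel f ∈ T := by
  have hYWL : Y ∈ WL C T := hW.subset hYW
  have himT : image f ∈ T := hT.quot_mem (factorThruImage f) inferInstance hX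
  have himWL : image f ∈ WL C T := by
    refine ⟨himT, fun Z g hZ => ?_⟩
    exact torsIso14 hT (kernelCompMono g (image.ι f)) (hYWL.2 (g ≫ image.ι f) hZ)
  exact ⟨hW.sub_mem (image.ι f) inferInstance himWL hYW, hYWL.2 f hX⟩

end Helpers14

attribute [local instance] CategoryTheory.Abelian.Pseudoelement.objectToSort
  CategoryTheory.Abelian.Pseudoelement.homToFun

/-- For a torsion class `T`, a Serre subcategory `W` of `W_L(T)`, and a morphism
`f : X → Y` with `X ∈ T` and `Y ∈ F(W)`, one has `im f ∈ W` and `ker f ∈ T`. -/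
theorem stmt_14 [Noetherian C] [Artinian C]
    (T : Set C) (hT : IsTorsionClass C T)
    (W : Set C) (hW : IsSerreIn C (WL C T) W)
    {X Y : C} (f : X ⟶ Y) (hX : X ∈ T) (hY : Y ∈ torfClosure C W) :
    image f ∈ W ∧ kernel f ∈ T := by
  set P : Set C := {Y : C | ∀ (X : C), X ∈ T → ∀ f : X ⟶ Y, image f ∈ W ∧ kernel f ∈ T}
    with hPdef
  have hsub : W ⊆ P := fun Y hYW X hX f => baseCase14 hT hW hYW hX f
  have hPtf : IsTorsionFreeClass C P := by
    constructor
    · -- zero objects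
      intro Z hZ X hX f
      have hf : f = 0 := hZ.eq_of_tgt f 0
      subst hf
      constructor
      · exact hW.zero_mem _ (CategoryTheory.Limits.IsZero.of_mono (image.ι (0 : X ⟶ Z)) hZ)
      · exact torsIso14 hT (kernelZeroIsoSource (X := X) (Y := Z)).symm hX
    · -- subobjects
      intro A B ι hι hB X hX f
      haveI := hι
      obtain ⟨him, hker⟩ := hB X hX (f ≫ ι)
      exact ⟨WIso14 hT hW (imageCompMonoIso14 f ι).symm him,
        torsIso14 hT (kernelCompMono f ι) hker⟩
    · -- extensions
      intro E hE h1 h3 X hX f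
      haveI := hE.mono_f
      haveI := hE.epi_g
      obtain ⟨hW3, hK⟩ := h3 X hX (f ≫ E.g)
      set k : kernel (f ≫ E.g) ⟶ X := kernel.ι (f ≫ E.g) with hk
      have w : (k ≫ f) ≫ E.g = 0 := by rw [Category.assoc, kernel.condition]
      obtain ⟨q, hq⟩ := hE.exact.lift' (k ≫ f) w
      obtain ⟨hWq, hKq⟩ := h1 (kernel (f ≫ E.g)) hK q
      -- kernel f ∈ T
      have hkerT : kernel f ∈ T := by
        have h2 : kernel (q ≫ E.f) ∈ T := torsIso14 hT (kernelCompMono q E.f).symm hKq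
        exact torsIso14 hT (kernelCongr14 hq ≪≫ kerKerι14 f E.g) h2
      -- image (k ≫ f) ∈ W
      have h5 : image (k ≫ f) ∈ W := by
        have h6 : image (q ≫ E.f) ∈ W := WIso14 hT hW (imageCompMonoIso14 q E.f) hWq
        exact WIso14 hT hW (imageCongr14 hq) h6
      -- the short exact sequence  image (k ≫ f) → image f → image (f ≫ E.g)
      let u : image (k ≫ f) ⟶ image f := image.lift
        { I := image f, m := image.ι f, e := k ≫ factorThruImage f,
          fac := by rw [Category.assoc, image.fac] }
      have hu : u ≫ image.ι f = image.ι (k ≫ f) := image.lift_fac _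
      have wsq : (𝟙 X) ≫ (f ≫ E.g) = f ≫ E.g := Category.id_comp _
      let v : image f ⟶ image (f ≫ E.g) := image.map (Arrow.homMk' _ _ wsq)
      have hv : v ≫ image.ι (f ≫ E.g) = image.ι f ≫ E.g := image.map_homMk'_ι wsq
      have hfacv : factorThruImage f ≫ v = factorThruImage (f ≫ E.g) := by
        have h7 := image.factor_map (Arrow.homMk' _ _ wsq)
        simpa using h7
      haveI hmonou : Mono u := by
        have : Mono (u ≫ image.ι f) := by rw [hu]; infer_instance
        exact mono_of_mono u (image.ι f)
      haveI hepiv : Epi v := by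
        have : Epi (factorThruImage f ≫ v) := by rw [hfacv]; infer_instance
        exact epi_of_epi (factorThruImage f) v
      have hι0 : image.ι (k ≫ f) ≫ E.g = 0 := by
        rw [← cancel_epi (factorThruImage (k ≫ f)), ← Category.assoc, image.fac,
          Category.assoc, comp_zero]
        exact kernel.condition _
      have huv : u ≫ v = 0 := by
        rw [← cancel_mono (image.ι (f ≫ E.g)), Category.assoc, hv, zero_comp,
          ← Category.assoc, hu]
        exact hι0
      have hfu : factorThruImage (k ≫ f) ≫ u = k ≫ factorThruImage f := by
        rw [← cancel_mono (image.ι f), Category.assoc, hu, image.fac,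
          Category.assoc, image.fac]
      let S' : ShortComplex C := ShortComplex.mk u v huv
      have hex : S'.Exact := by
        apply Abelian.Pseudoelement.exact_of_pseudo_exact
        intro b hb
        obtain ⟨a, ha⟩ := Abelian.Pseudoelement.pseudo_surjective_of_epi (factorThruImage f) b
        have ha2 : (factorThruImage (f ≫ E.g) : X ⟶ image (f ≫ E.g)) a = 0 := by
          rw [← hfacv, Abelian.Pseudoelement.comp_apply, ha]
          exact hb
        have ha3 : (f ≫ E.g : X ⟶ E.X₃) a = 0 := by
          rw [← image.fac (f ≫ E.g), Abelian.Pseudoelement.comp_apply, ha2,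
            Abelian.Pseudoelement.apply_zero]
        obtain ⟨c, hc⟩ := Abelian.Pseudoelement.pseudo_exact_of_exact
          (ShortComplex.exact_kernel (f ≫ E.g)) a ha3
        refine ⟨(factorThruImage (k ≫ f) : kernel (f ≫ E.g) ⟶ image (k ≫ f)) c, ?_⟩
        show (u : image (k ≫ f) ⟶ image f) _ = b
        rw [← Abelian.Pseudoelement.comp_apply, hfu, Abelian.Pseudoelement.comp_apply, hc]
        exact ha
      have hSE : S'.ShortExact := ShortComplex.ShortExact.mk' hex hmonou hepiv
      have hWL2 : image f ∈ WL C T :=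
        WLExt14 hT S' hSE (hW.subset h5) (hW.subset hW3)
      exact ⟨hW.ext_mem S' hSE hWL2 h5 hW3, hkerT⟩
  exact hY P ⟨hPtf, hsub⟩ X hX f
end

section
/- Let 𝒜 be an abelian length category, 𝒰 ⊆ 𝒯 torsion classes, and 𝒲 := 𝒰^⊥ ∩ 𝒯. The following are equivalent: (a) 𝒲 is a wide subcategory of 𝒜; (b) 𝒲 is a Serre subcategory of W_L(𝒯); (c) 𝒲 is a Serre subcategory of W_R(𝒰^⊥); (d) 𝒲 = W_R(𝒰^⊥) ∩ W_L(𝒯). -/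
open CategoryTheory CategoryTheory.Limits

universe v u

attribute [local instance] CategoryTheory.Abelian.hasFiniteBiproducts

variable (C : Type u) [Category.{v} C] [Abelian C]

/-! ### Auxiliary lemmas for `stmt_18` -/

namespace Stmt18Aux

open CategoryTheory.Abelian

variable {C : Type u} [Category.{v} C] [Abelian C]

/-- Torsion classes are closed under isomorphisms. -/
lemma tors_iso {T : Set C} (hT : IsTorsionClass C T) {X Y : C} (e : X ≅ Y) (hX : X ∈ T) :
    Y ∈ T :=
  hT.quot_mem e.hom inferInstance hX

/-- Torsion-free classes are closed under isomorphisms. -/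
lemma torf_iso {F : Set C} (hF : IsTorsionFreeClass C F) {X Y : C} (e : X ≅ Y) (hX : X ∈ F) :
    Y ∈ F :=
  hF.sub_mem e.inv inferInstance hX

lemma rperp_zero {U : Set C} {Z : C} (hZ : IsZero Z) : Z ∈ RPerp C U :=
  fun _ _ f => hZ.eq_of_tgt f 0

lemma rperp_sub {U : Set C} {A B : C} (f : A ⟶ B) (hf : Mono f) (hB : B ∈ RPerp C U) :
    A ∈ RPerp C U := by
  intro Z hZ g
  haveI := hf
  exact zero_of_comp_mono f (hB Z hZ (g ≫ f))

lemma rperp_ext {U : Set C} (E : ShortComplex C) (hE : E.ShortExact)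
    (h1 : E.X₁ ∈ RPerp C U) (h3 : E.X₃ ∈ RPerp C U) : E.X₂ ∈ RPerp C U := by
  intro A hA f
  obtain ⟨l, hl⟩ := KernelFork.IsLimit.lift' hE.fIsKernel f (h3 A hA (f ≫ E.g))
  have hl' : l ≫ E.f = f := hl
  rw [← hl', h1 A hA l, zero_comp]

lemma rperp_isTorsionFreeClass (U : Set C) : IsTorsionFreeClass C (RPerp C U) where
  zero_mem _ hZ := rperp_zero hZ
  sub_mem _ _ f hf hB := rperp_sub f hf hB
  ext_mem E hE h1 h3 := rperp_ext E hE h1 h3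

lemma rperp_antitone {U T : Set C} (hUT : U ⊆ T) : RPerp C T ⊆ RPerp C U :=
  fun _ hY A hA f => hY A (hUT hA) f

/-- The short complex `kernel q → X → Y` for an epi `q`. -/
@[reducible]
noncomputable def kerSC {X Y : C} (q : X ⟶ Y) : ShortComplex C :=
  ShortComplex.mk (kernel.ι q) q (kernel.condition q)

lemma kerSC_shortExact {X Y : C} (q : X ⟶ Y) [Epi q] : (kerSC q).ShortExact :=
  ShortComplex.ShortExact.mk' (ShortComplex.exact_of_f_is_kernel _ (kernelIsKernel q))
    (inferInstanceAs (Mono (kernel.ι q))) (inferInstanceAs (Epi q))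

/-- The short complex `X → Y → cokernel i` for a mono `i`. -/
@[reducible]
noncomputable def cokerSC {X Y : C} (i : X ⟶ Y) : ShortComplex C :=
  ShortComplex.mk i (cokernel.π i) (cokernel.condition i)

lemma cokerSC_shortExact {X Y : C} (i : X ⟶ Y) [Mono i] : (cokerSC i).ShortExact :=
  ShortComplex.ShortExact.mk' (ShortComplex.exact_of_g_is_cokernel _ (cokernelIsCokernel i))
    (inferInstanceAs (Mono i)) (inferInstanceAs (Epi (cokernel.π i)))

open CategoryTheory.Abelian.Pseudoelement in
/-- For `p : Y ⟶ Q` epi, `h : Q ⟶ Z` and `g = p ≫ h`, the sequence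
`kernel p → kernel g → kernel h` is short exact. -/
@[reducible]
noncomputable def kerCompSC {Y Q Z : C} (p : Y ⟶ Q) (h : Q ⟶ Z) (g : Y ⟶ Z)
    (w : p ≫ h = g) : ShortComplex C :=
  ShortComplex.mk
    (kernel.lift g (kernel.ι p) (by rw [← w, ← Category.assoc, kernel.condition, zero_comp]))
    (kernel.lift h (kernel.ι g ≫ p) (by rw [Category.assoc, w, kernel.condition]))
    (by
      apply zero_of_comp_mono (kernel.ι h)
      rw [Category.assoc, kernel.lift_ι, ← Category.assoc, kernel.lift_ι, kernel.condition])

open CategoryTheory.Abelian.Pseudoelement in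
lemma kerCompSC_shortExact {Y Q Z : C} (p : Y ⟶ Q) (h : Q ⟶ Z) (g : Y ⟶ Z)
    (w : p ≫ h = g) [Epi p] : (kerCompSC p h g w).ShortExact := by
  have hf : (kerCompSC p h g w).f ≫ kernel.ι g = kernel.ι p := kernel.lift_ι _ _ _
  have hg : (kerCompSC p h g w).g ≫ kernel.ι h = kernel.ι g ≫ p := kernel.lift_ι _ _ _
  have hex2 := pseudo_exact_of_exact (S := kerSC g)
    (ShortComplex.exact_of_f_is_kernel _ (kernelIsKernel g))
  have hmono : Mono (kerCompSC p h g w).f := mono_of_mono_fac hf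
  have hepi : Epi (kerCompSC p h g w).g := by
    apply epi_of_pseudo_surjective
    intro c
    obtain ⟨y, hy⟩ := pseudo_surjective_of_epi p (pseudoApply (kernel.ι h) c)
    have hy0 : pseudoApply g y = 0 := by
      rw [← w, Abelian.Pseudoelement.comp_apply, hy, ← Abelian.Pseudoelement.comp_apply,
        kernel.condition, Pseudoelement.zero_apply]
    obtain ⟨v, hv⟩ := hex2 y hy0
    refine ⟨v, ?_⟩
    apply pseudo_injective_of_mono (kernel.ι h)
    rw [← Abelian.Pseudoelement.comp_apply, hg, Abelian.Pseudoelement.comp_apply]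
    have hv' : pseudoApply (kernel.ι g) v = y := hv
    rw [hv', hy]
  refine ShortComplex.ShortExact.mk' ?_ hmono hepi
  apply exact_of_pseudo_exact
  intro b hb
  have hb' : pseudoApply p (pseudoApply (kernel.ι g) b) = 0 := by
    rw [← Abelian.Pseudoelement.comp_apply, ← hg, Abelian.Pseudoelement.comp_apply, hb,
      apply_zero]
  have hexp2 := pseudo_exact_of_exact (S := kerSC p)
    (ShortComplex.exact_of_f_is_kernel _ (kernelIsKernel p))
  obtain ⟨k, hk⟩ := hexp2 (pseudoApply (kernel.ι g) b) hb'
  refine ⟨k, ?_⟩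
  apply pseudo_injective_of_mono (kernel.ι g)
  rw [← Abelian.Pseudoelement.comp_apply, hf]
  exact hk

open CategoryTheory.Abelian.Pseudoelement in
/-- For `i : Q ⟶ Y` mono, `h : X ⟶ Q` and `f = h ≫ i`, the sequence
`cokernel h → cokernel f → cokernel i` is short exact. -/
@[reducible]
noncomputable def cokerCompSC {X Q Y : C} (h : X ⟶ Q) (i : Q ⟶ Y) (f : X ⟶ Y)
    (w : h ≫ i = f) : ShortComplex C :=
  ShortComplex.mk
    (cokernel.desc h (i ≫ cokernel.π f) (by rw [← Category.assoc, w, cokernel.condition]))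
    (cokernel.desc f (cokernel.π i) (by rw [← w, Category.assoc, cokernel.condition, comp_zero]))
    (by
      apply zero_of_epi_comp (cokernel.π h)
      rw [← Category.assoc, cokernel.π_desc, Category.assoc, cokernel.π_desc,
        cokernel.condition])

open CategoryTheory.Abelian.Pseudoelement in
lemma cokerCompSC_shortExact {X Q Y : C} (h : X ⟶ Q) (i : Q ⟶ Y) (f : X ⟶ Y)
    (w : h ≫ i = f) [Mono i] : (cokerCompSC h i f w).ShortExact := by
  have hf : cokernel.π h ≫ (cokerCompSC h i f w).f = i ≫ cokernel.π f := cokernel.π_desc _ _ _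
  have hg : cokernel.π f ≫ (cokerCompSC h i f w).g = cokernel.π i := cokernel.π_desc _ _ _
  have hepi : Epi (cokerCompSC h i f w).g := epi_of_epi_fac hg
  have hexf := pseudo_exact_of_exact (S := cokerSC f)
    (ShortComplex.exact_of_g_is_cokernel _ (cokernelIsCokernel f))
  have hmono : Mono (cokerCompSC h i f w).f := by
    apply mono_of_zero_of_map_zero
    intro x hx
    obtain ⟨q, hq⟩ := pseudo_surjective_of_epi (cokernel.π h) x
    have hπq : pseudoApply (cokernel.π f) (pseudoApply i q) = 0 := by
      rw [← Abelian.Pseudoelement.comp_apply, ← hf, Abelian.Pseudoelement.comp_apply, hq, hx]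
    obtain ⟨x', hx'⟩ := hexf (pseudoApply i q) hπq
    have hx'' : pseudoApply i (pseudoApply h x') = pseudoApply i q := by
      rw [← Abelian.Pseudoelement.comp_apply, w]; exact hx'
    have : pseudoApply h x' = q := pseudo_injective_of_mono i hx''
    rw [← hq, ← this, ← Abelian.Pseudoelement.comp_apply, cokernel.condition, Pseudoelement.zero_apply]
  refine ShortComplex.ShortExact.mk' ?_ hmono hepi
  apply exact_of_pseudo_exact
  intro b hb
  obtain ⟨y, hy⟩ := pseudo_surjective_of_epi (cokernel.π f) b
  have hy0 : pseudoApply (cokernel.π i) y = 0 := by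
    rw [← hg, Abelian.Pseudoelement.comp_apply, hy, hb]
  have hexi := pseudo_exact_of_exact (S := cokerSC i)
    (ShortComplex.exact_of_g_is_cokernel _ (cokernelIsCokernel i))
  obtain ⟨q, hq⟩ := hexi y hy0
  refine ⟨pseudoApply (cokernel.π h) q, ?_⟩
  rw [← Abelian.Pseudoelement.comp_apply, hf, Abelian.Pseudoelement.comp_apply]
  have hq' : pseudoApply i q = y := hq
  rw [hq', hy]

/-- In a pullback square, the kernel of one projection is the kernel of the opposite side. -/
noncomputable def kernelIsoOfIsPullback {P X Y Z : C} {a : P ⟶ X} {b : P ⟶ Y} {f : X ⟶ Z}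
    {g : Y ⟶ Z} (sq : IsPullback a b f g) : kernel b ≅ kernel f where
  hom := kernel.lift f (kernel.ι b ≫ a)
    (by rw [Category.assoc, sq.w, ← Category.assoc, kernel.condition, zero_comp])
  inv := kernel.lift b (sq.lift (kernel.ι f) 0 (by rw [kernel.condition, zero_comp]))
    (sq.lift_snd _ _ _)
  hom_inv_id := by
    rw [← cancel_mono (kernel.ι b)]
    rw [Category.assoc, kernel.lift_ι, Category.id_comp]
    apply sq.hom_ext
    · rw [Category.assoc, sq.lift_fst, kernel.lift_ι]
    · rw [Category.assoc, sq.lift_snd, comp_zero, kernel.condition]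
  inv_hom_id := by
    rw [← cancel_mono (kernel.ι f)]
    rw [Category.assoc, kernel.lift_ι, Category.id_comp, ← Category.assoc, kernel.lift_ι,
      sq.lift_fst]

/-- In a pushout square, the cokernel of one injection is the cokernel of the opposite side. -/
noncomputable def cokernelIsoOfIsPushout {P X Y Z : C} {f : Z ⟶ X} {g : Z ⟶ Y} {a : X ⟶ P}
    {b : Y ⟶ P} (sq : IsPushout f g a b) : cokernel b ≅ cokernel f where
  hom := cokernel.desc b (sq.desc (cokernel.π f) 0
      (by rw [cokernel.condition, comp_zero])) (sq.inr_desc _ _ _)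
  inv := cokernel.desc f (a ≫ cokernel.π b)
    (by rw [← Category.assoc, sq.w, Category.assoc, cokernel.condition, comp_zero])
  hom_inv_id := by
    rw [← cancel_epi (cokernel.π b)]
    rw [← Category.assoc, cokernel.π_desc, Category.comp_id]
    apply sq.hom_ext
    · rw [← Category.assoc, sq.inl_desc, cokernel.π_desc]
    · rw [← Category.assoc, sq.inr_desc, zero_comp, cokernel.condition]
  inv_hom_id := by
    rw [← cancel_epi (cokernel.π f)]
    rw [← Category.assoc, cokernel.π_desc, Category.comp_id, Category.assoc, cokernel.π_desc,
      sq.inl_desc]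

/-- If `h ≫ m = kernel.ι (g ≫ q)-style` factorization exists then `kernel h ≅ kernel g`. -/
noncomputable def kernelIsoOfCompFac {Y A B Z : C} (g : Y ⟶ B) (q : B ⟶ Z) (m : A ⟶ B)
    [Mono m] (h : kernel (g ≫ q) ⟶ A) (hh : h ≫ m = kernel.ι (g ≫ q) ≫ g) :
    kernel h ≅ kernel g where
  hom := kernel.lift g (kernel.ι h ≫ kernel.ι (g ≫ q)) (by
    rw [Category.assoc, ← hh, ← Category.assoc, kernel.condition, zero_comp])
  inv := kernel.lift h (kernel.lift (g ≫ q) (kernel.ι g)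
      (by rw [← Category.assoc, kernel.condition, zero_comp])) (by
    apply zero_of_comp_mono m
    rw [Category.assoc, hh, ← Category.assoc, kernel.lift_ι, kernel.condition])
  hom_inv_id := by
    rw [← cancel_mono (kernel.ι h)]
    rw [Category.assoc, kernel.lift_ι, Category.id_comp]
    rw [← cancel_mono (kernel.ι (g ≫ q))]
    rw [Category.assoc, kernel.lift_ι, kernel.lift_ι]
  inv_hom_id := by
    rw [← cancel_mono (kernel.ι g)]
    simp only [Category.assoc, kernel.lift_ι, Category.id_comp]
    rw [← Category.assoc, kernel.lift_ι, kernel.lift_ι]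

/-- Dual of `kernelIsoOfCompFac`. -/
noncomputable def cokernelIsoOfCompFac {X B Z A : C} (h : B ⟶ Z) (q : X ⟶ B) (e : B ⟶ A)
    [Epi e] (k : A ⟶ cokernel (q ≫ h)) (hk : e ≫ k = h ≫ cokernel.π (q ≫ h)) :
    cokernel k ≅ cokernel h where
  hom := cokernel.desc k (cokernel.desc (q ≫ h) (cokernel.π h)
      (by rw [Category.assoc, cokernel.condition, comp_zero])) (by
    apply zero_of_epi_comp e
    rw [← Category.assoc, hk, Category.assoc, cokernel.π_desc, cokernel.condition])
  inv := cokernel.desc h (cokernel.π (q ≫ h) ≫ cokernel.π k) (by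
    rw [← Category.assoc, ← hk, Category.assoc, cokernel.condition, comp_zero])
  hom_inv_id := by
    rw [← cancel_epi (cokernel.π k)]
    rw [← Category.assoc, cokernel.π_desc, Category.comp_id]
    rw [← cancel_epi (cokernel.π (q ≫ h))]
    rw [← Category.assoc, cokernel.π_desc, cokernel.π_desc]
  inv_hom_id := by
    rw [← cancel_epi (cokernel.π h)]
    rw [← Category.assoc, cokernel.π_desc, Category.comp_id, Category.assoc, cokernel.π_desc,
      cokernel.π_desc]


/-- Every object of a noetherian abelian category has a maximal torsion subobject whose
quotient is torsion-free. -/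
lemma torsion_decomp {T : Set C} (hT : IsTorsionClass C T) [Noetherian C] (Y : C) :
    ∃ (T' : C) (i : T' ⟶ Y) (_ : Mono i), T' ∈ T ∧ cokernel i ∈ RPerp C T := by
  obtain ⟨A, hA, hmax⟩ := (@wellFounded_gt (Subobject Y) _
    (by haveI := Noetherian.isNoetherianObject (C := C) Y; infer_instance)).has_min
    {A : Subobject Y | (A : C) ∈ T}
    ⟨⊥, hT.zero_mem _ (IsZero.of_iso (isZero_zero C) Subobject.botCoeIsoZero)⟩
  refine ⟨(A : C), A.arrow, inferInstance, hA, ?_⟩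
  intro B hB h
  -- `q` is the composite `Y ⟶ cokernel A.arrow ⟶ cokernel h`
  have h1 : kernel (cokernel.π A.arrow) ∈ T :=
    hT.quot_mem (Abelian.factorThruImage A.arrow) inferInstance hA
  have h3 : kernel (cokernel.π h) ∈ T :=
    hT.quot_mem (Abelian.factorThruImage h) inferInstance hB
  have hq : kernel (cokernel.π A.arrow ≫ cokernel.π h) ∈ T :=
    hT.ext_mem _ (kerCompSC_shortExact (cokernel.π A.arrow) (cokernel.π h) _ rfl) h1 h3
  have harrow : A.arrow ≫ cokernel.π A.arrow ≫ cokernel.π h = 0 := by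
    rw [← Category.assoc, cokernel.condition, zero_comp]
  have hle : A ≤ Subobject.mk (kernel.ι (cokernel.π A.arrow ≫ cokernel.π h)) :=
    Subobject.le_mk_of_comm (kernel.lift _ A.arrow harrow) (kernel.lift_ι _ _ _)
  have hmem : Subobject.mk (kernel.ι (cokernel.π A.arrow ≫ cokernel.π h)) ∈
      {A : Subobject Y | (A : C) ∈ T} :=
    tors_iso hT (Subobject.underlyingIso _).symm hq
  have heq : A = Subobject.mk (kernel.ι (cokernel.π A.arrow ≫ cokernel.π h)) :=
    hle.lt_or_eq.resolve_left (hmax _ hmem)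
  -- build a retraction showing the first map in the kernel sequence is a split epi
  have hv : ((Subobject.underlyingIso (kernel.ι (cokernel.π A.arrow ≫ cokernel.π h))).inv ≫
      Subobject.ofLE _ A heq.ge) ≫ A.arrow =
        kernel.ι (cokernel.π A.arrow ≫ cokernel.π h) := by
    rw [Category.assoc, Subobject.ofLE_arrow, Subobject.underlyingIso_arrow]
  set E := kerCompSC (cokernel.π A.arrow) (cokernel.π h)
    (cokernel.π A.arrow ≫ cokernel.π h) rfl with hE
  have hsec : (((Subobject.underlyingIso (kernel.ι (cokernel.π A.arrow ≫ cokernel.π h))).inv ≫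
      Subobject.ofLE _ A heq.ge) ≫ Abelian.factorThruImage A.arrow) ≫ E.f = 𝟙 _ := by
    rw [← cancel_mono (kernel.ι (cokernel.π A.arrow ≫ cokernel.π h))]
    rw [Category.assoc, Category.assoc]
    have hEf : E.f ≫ kernel.ι (cokernel.π A.arrow ≫ cokernel.π h) =
        kernel.ι (cokernel.π A.arrow) := kernel.lift_ι _ _ _
    rw [hEf, Category.id_comp]
    have : Abelian.factorThruImage A.arrow ≫ kernel.ι (cokernel.π A.arrow) = A.arrow :=
      Abelian.image.fac A.arrow
    rw [this]
    exact hv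
  have hepiEf : Epi E.f := epi_of_epi_fac hsec
  have hEg0 : E.g = 0 := by
    rw [← cancel_epi E.f, E.zero, comp_zero]
  have hEgepi : Epi E.g := (kerCompSC_shortExact _ _ _ rfl).epi_g
  have hzero : IsZero (kernel (cokernel.π h)) := by
    rw [IsZero.iff_id_eq_zero, ← cancel_epi E.g]
    rw [comp_zero, hEg0, zero_comp]
  have hι0 : Abelian.image.ι h = 0 := hzero.eq_of_src _ 0
  rw [← Abelian.image.fac h, hι0, comp_zero]

/-- The left wide subcategory of a torsion class is wide. -/
lemma WL_wide {T : Set C} (hT : IsTorsionClass C T) : IsWide C (WL C T) where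
  zero_mem Z hZ := by
    refine ⟨hT.zero_mem Z hZ, ?_⟩
    intro Y g hY
    have hg : g = 0 := hZ.eq_of_tgt g 0
    subst hg
    exact tors_iso hT kernelZeroIsoSource.symm hY
  ker_mem X Y f hX hY := by
    refine ⟨hY.2 f hX.1, ?_⟩
    intro Y' g hY'
    exact tors_iso hT (kernelCompMono g (kernel.ι f)) (hX.2 (g ≫ kernel.ι f) hY')
  coker_mem X Y f hX hY := by
    refine ⟨hT.quot_mem (cokernel.π f) inferInstance hY.1, ?_⟩
    intro Z g hZ
    have h1 : kernel (cokernel.π f) ∈ T :=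
      hT.quot_mem (Abelian.factorThruImage f) inferInstance hX.1
    have hker_snd : kernel (pullback.snd (cokernel.π f) g) ∈ T :=
      tors_iso hT (kernelIsoOfIsPullback (IsPullback.of_hasPullback _ _)).symm h1
    haveI : Epi (pullback.snd (cokernel.π f) g) := inferInstance
    have hP : pullback (cokernel.π f) g ∈ T :=
      hT.ext_mem _ (kerSC_shortExact (pullback.snd (cokernel.π f) g)) hker_snd hZ
    exact tors_iso hT (kernelIsoOfIsPullback (IsPullback.of_hasPullback _ _).flip)
      (hY.2 (pullback.fst (cokernel.π f) g) hP)
  ext_mem E hE h1 h3 := by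
    refine ⟨hT.ext_mem E hE h1.1 h3.1, ?_⟩
    intro Y g hY
    have hK : kernel (g ≫ E.g) ∈ T := h3.2 (g ≫ E.g) hY
    obtain ⟨h, hh⟩ := KernelFork.IsLimit.lift' hE.fIsKernel (kernel.ι (g ≫ E.g) ≫ g)
      (by rw [Category.assoc, kernel.condition])
    have hh' : h ≫ E.f = kernel.ι (g ≫ E.g) ≫ g := hh
    haveI := hE.mono_f
    exact tors_iso hT (kernelIsoOfCompFac g E.g E.f h hh') (h1.2 h hK)

/-- The right wide subcategory of a torsion-free class is wide. -/
lemma WR_wide {F : Set C} (hF : IsTorsionFreeClass C F) : IsWide C (WR C F) where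
  zero_mem Z hZ := by
    refine ⟨hF.zero_mem Z hZ, ?_⟩
    intro Y g hY
    have hg : g = 0 := hZ.eq_of_src g 0
    subst hg
    exact torf_iso hF cokernelZeroIsoTarget.symm hY
  ker_mem X Y f hX hY := by
    refine ⟨hF.sub_mem (kernel.ι f) inferInstance hX.1, ?_⟩
    intro Z h hZ
    have h3 : cokernel (kernel.ι f) ∈ F :=
      hF.sub_mem (Abelian.factorThruCoimage f) inferInstance hY.1
    have hcoker_inr : cokernel (pushout.inr (kernel.ι f) h) ∈ F :=
      torf_iso hF (cokernelIsoOfIsPushout (IsPushout.of_hasPushout _ _)).symm h3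
    haveI : Mono (pushout.inr (kernel.ι f) h) := inferInstance
    have hP : pushout (kernel.ι f) h ∈ F :=
      hF.ext_mem _ (cokerSC_shortExact (pushout.inr (kernel.ι f) h)) hZ hcoker_inr
    exact torf_iso hF (cokernelIsoOfIsPushout (IsPushout.of_hasPushout _ _).flip)
      (hX.2 (pushout.inl (kernel.ι f) h) hP)
  coker_mem X Y f hX hY := by
    refine ⟨hX.2 f hY.1, ?_⟩
    intro Z h hZ
    exact torf_iso hF (cokernelEpiComp (cokernel.π f) h) (hY.2 (cokernel.π f ≫ h) hZ)
  ext_mem E hE h1 h3 := by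
    refine ⟨hF.ext_mem E hE h1.1 h3.1, ?_⟩
    intro Z h hZ
    have hQ : cokernel (E.f ≫ h) ∈ F := h1.2 (E.f ≫ h) hZ
    obtain ⟨k, hk⟩ := CokernelCofork.IsColimit.desc' hE.gIsCokernel
      (h ≫ cokernel.π (E.f ≫ h)) (by rw [← Category.assoc, cokernel.condition])
    have hk' : E.g ≫ k = h ≫ cokernel.π (E.f ≫ h) := hk
    haveI := hE.epi_g
    exact torf_iso hF (cokernelIsoOfCompFac h E.f E.g k hk') (h3.2 k hQ)

/-- A Serre subcategory of a wide subcategory is wide. -/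
lemma wide_of_serre {V W : Set C} (hV : IsWide C V) (hS : IsSerreIn C V W) : IsWide C W where
  zero_mem := hS.zero_mem
  ker_mem X Y f hX hY := hS.sub_mem (kernel.ι f) inferInstance
    (hV.ker_mem f (hS.subset hX) (hS.subset hY)) hX
  coker_mem X Y f hX hY := hS.quot_mem (cokernel.π f) inferInstance
    (hV.coker_mem f (hS.subset hX) (hS.subset hY)) hY
  ext_mem E hE h1 h3 := hS.ext_mem E hE (hV.ext_mem E hE (hS.subset h1) (hS.subset h3)) h1 h3

/-- The intersection of two wide subcategories is wide. -/
lemma wide_inter {V₁ V₂ : Set C} (h1 : IsWide C V₁) (h2 : IsWide C V₂) :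
    IsWide C (V₁ ∩ V₂) where
  zero_mem Z hZ := ⟨h1.zero_mem Z hZ, h2.zero_mem Z hZ⟩
  ker_mem X Y f hX hY := ⟨h1.ker_mem f hX.1 hY.1, h2.ker_mem f hX.2 hY.2⟩
  coker_mem X Y f hX hY := ⟨h1.coker_mem f hX.1 hY.1, h2.coker_mem f hX.2 hY.2⟩
  ext_mem E hE a b := ⟨h1.ext_mem E hE a.1 b.1, h2.ext_mem E hE a.2 b.2⟩

section Main

variable [Noetherian C] {U T : Set C} (hU : IsTorsionClass C U) (hT : IsTorsionClass C T)
  (hUT : U ⊆ T)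

include hU hT hUT in
lemma subset_WL (hwide : IsWide C (RPerp C U ∩ T)) : RPerp C U ∩ T ⊆ WL C T := by
  intro X hX
  refine ⟨hX.2, ?_⟩
  intro Y g hY
  obtain ⟨T', i, hi, hiU, hperp⟩ := torsion_decomp hU Y
  haveI := hi
  have hig : i ≫ g = 0 := hX.1 T' hiU (i ≫ g)
  have hQ : cokernel i ∈ RPerp C U ∩ T :=
    ⟨hperp, hT.quot_mem (cokernel.π i) inferInstance hY⟩
  have hk : kernel (cokernel.desc i g hig) ∈ RPerp C U ∩ T := hwide.ker_mem _ hQ hX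
  have h1 : kernel (cokernel.π i) ∈ T :=
    tors_iso hT (asIso (Abelian.factorThruImage i)) (hUT hiU)
  exact hT.ext_mem _ (kerCompSC_shortExact (cokernel.π i) (cokernel.desc i g hig) g
    (cokernel.π_desc i g hig)) h1 hk.2

include hU hT hUT in
lemma subset_WR (hwide : IsWide C (RPerp C U ∩ T)) :
    RPerp C U ∩ T ⊆ WR C (RPerp C U) := by
  intro X hX
  refine ⟨hX.1, ?_⟩
  intro Y f hY
  obtain ⟨T', i, hi, hiT, hperp⟩ := torsion_decomp hT Y
  haveI := hi
  have hfq : f ≫ cokernel.π i = 0 := hperp X hX.2 (f ≫ cokernel.π i)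
  have hK : kernel (cokernel.π i) ∈ RPerp C U ∩ T :=
    ⟨rperp_sub (kernel.ι (cokernel.π i)) inferInstance hY,
      tors_iso hT (asIso (Abelian.factorThruImage i)) hiT⟩
  have hcokf' : cokernel (kernel.lift (cokernel.π i) f hfq) ∈ RPerp C U ∩ T :=
    hwide.coker_mem _ hX hK
  have hcokm : cokernel (kernel.ι (cokernel.π i)) ∈ RPerp C U :=
    rperp_sub (Abelian.factorThruCoimage (cokernel.π i)) inferInstance
      (rperp_antitone hUT hperp)
  exact rperp_ext _ (cokerCompSC_shortExact (kernel.lift (cokernel.π i) f hfq)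
    (kernel.ι (cokernel.π i)) f (kernel.lift_ι _ _ _)) hcokf'.1 hcokm

include hU hT hUT in
lemma serre_WL (hwide : IsWide C (RPerp C U ∩ T)) :
    IsSerreIn C (WL C T) (RPerp C U ∩ T) where
  subset := subset_WL hU hT hUT hwide
  zero_mem Z hZ := ⟨rperp_zero hZ, hT.zero_mem Z hZ⟩
  sub_mem A X f hf hA hX := ⟨rperp_sub f hf hX.1, hA.1⟩
  quot_mem X B f hf hB hX := by
    have hK : kernel f ∈ RPerp C U ∩ T :=
      ⟨rperp_sub (kernel.ι f) inferInstance hX.1, hB.2 f hX.2⟩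
    have hcok := hwide.coker_mem (kernel.ι f) hK hX
    haveI := hf
    refine ⟨rperp_sub (asIso (Abelian.factorThruCoimage f)).inv inferInstance hcok.1,
      tors_iso hT (asIso (Abelian.factorThruCoimage f)) hcok.2⟩
  ext_mem E hE _ h1 h3 := ⟨rperp_ext E hE h1.1 h3.1, hT.ext_mem E hE h1.2 h3.2⟩

include hU hT hUT in
lemma serre_WR (hwide : IsWide C (RPerp C U ∩ T)) :
    IsSerreIn C (WR C (RPerp C U)) (RPerp C U ∩ T) where
  subset := subset_WR hU hT hUT hwide
  zero_mem Z hZ := ⟨rperp_zero hZ, hT.zero_mem Z hZ⟩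
  sub_mem A X f hf hA hX := by
    haveI := hf
    have hcok : cokernel f ∈ RPerp C U ∩ T :=
      ⟨hA.2 f hX.1, hT.quot_mem (cokernel.π f) inferInstance hX.2⟩
    have hk := hwide.ker_mem (cokernel.π f) hX hcok
    exact ⟨rperp_sub (asIso (Abelian.factorThruImage f)).hom inferInstance hk.1,
      tors_iso hT (asIso (Abelian.factorThruImage f)).symm hk.2⟩
  quot_mem X B f hf hB hX := ⟨hB.1, hT.quot_mem f hf hX.2⟩
  ext_mem E hE _ h1 h3 := ⟨rperp_ext E hE h1.1 h3.1, hT.ext_mem E hE h1.2 h3.2⟩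

end Main

end Stmt18Aux

/-- For torsion classes `U ⊆ T` and `W := U^⊥ ∩ T`, the following are equivalent:
(a) `W` is wide; (b) `W` is a Serre subcategory of `W_L(T)`; (c) `W` is a Serre
subcategory of `W_R(U^⊥)`; (d) `W = W_R(U^⊥) ∩ W_L(T)`. -/
theorem stmt_18 [Noetherian C] [Artinian C]
    (U T : Set C) (hU : IsTorsionClass C U) (hT : IsTorsionClass C T) (hUT : U ⊆ T)
    (W : Set C) (hW : W = RPerp C U ∩ T) :
    List.TFAE
      [IsWide C W,
       IsSerreIn C (WL C T) W,
       IsSerreIn C (WR C (RPerp C U)) W,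
       W = WR C (RPerp C U) ∩ WL C T] := by
  subst hW
  have hFW := Stmt18Aux.rperp_isTorsionFreeClass (C := C) U
  tfae_have 1 → 2 := fun h => Stmt18Aux.serre_WL hU hT hUT h
  tfae_have 2 → 1 := fun h => Stmt18Aux.wide_of_serre (Stmt18Aux.WL_wide hT) h
  tfae_have 1 → 3 := fun h => Stmt18Aux.serre_WR hU hT hUT h
  tfae_have 3 → 1 := fun h => Stmt18Aux.wide_of_serre (Stmt18Aux.WR_wide hFW) h
  tfae_have 1 → 4 := fun h => Set.Subset.antisymm
    (fun X hX => ⟨Stmt18Aux.subset_WR hU hT hUT h hX, Stmt18Aux.subset_WL hU hT hUT h hX⟩)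
    (fun X hX => ⟨hX.1.1, hX.2.1⟩)
  tfae_have 4 → 1 := fun h => h ▸ Stmt18Aux.wide_inter (Stmt18Aux.WR_wide hFW)
    (Stmt18Aux.WL_wide hT)
  tfae_finish
end
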